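/- arXiv:2306.08084 — 11 statements merged into one kernel-verified Lean document; each statement's English description precedes it below -/
import Mathlib

section
/- Suppose 𝒳 is a standard Borel space, and let κ₁ and κ₀ be regular conditional distributions (disintegration kernels) of Y given X under μ₁ and μ₀ respectively. Assume that for μ₀∘X⁻¹-a.e. x, 0 < ∫ e^{η q(y)} κ₁(x, dy) < ∞ and κ₀(x, ·) has density y ↦ e^{η q(y)} / ∫ e^{η q(u)} κ₁(x, du) with respect to κ₁(x, ·) (the exponential tilt model). Then, defining b(x) = (∫ ℓ(x,y) e^{η q(y)} κ₁(x,dy)) / (∫ e^{η q(y)} κ₁(x,dy)), the function b∘X is a version of the μ₀-conditional expectation E_{μ₀}[ℓ(X,Y) | σ(X)], whenever ℓ(X,Y) e^{η q(Y)} is μ₁-integrable and ℓ(X,Y) is μ₀-integrable. -/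
open MeasureTheory ProbabilityTheory Real

/-- Under the exponential tilt model stated at the level of regular conditional
distributions (disintegration kernels) of `Y` given `X` under the source (`μ₁`, i.e.
`S = 1`) and target (`μ₀`, i.e. `S = 0`) conditional measures, the tilted conditional loss
`b(x) = ∫ ℓ(x,y) e^{η q(y)} κ₁(x,dy) / ∫ e^{η q(y)} κ₁(x,dy)` composed with `X` is a version
of the `μ₀`-conditional expectation of the loss `ℓ(X,Y)` given `σ(X)`. -/
theorem tilted_conditional_loss_is_condexp
    {Ω : Type*} [MeasurableSpace Ω]
    {𝒳 : Type*} [MeasurableSpace 𝒳] [StandardBorelSpace 𝒳] [Nonempty 𝒳]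
    (μ : Measure Ω) [IsProbabilityMeasure μ]
    (X : Ω → 𝒳) (Y : Ω → ℝ) (S : Ω → Bool)
    (hX : Measurable X) (hY : Measurable Y) (hS : Measurable S)
    (hS1 : 0 < μ {ω | S ω = true}) (hS0 : 0 < μ {ω | S ω = false})
    (μ₁ μ₀ : Measure Ω) [IsProbabilityMeasure μ₁] [IsProbabilityMeasure μ₀]
    (hμ₁ : μ₁ = μ[|{ω | S ω = true}]) (hμ₀ : μ₀ = μ[|{ω | S ω = false}])
    -- κ₁ and κ₀ are regular conditional distributions of Y given X under μ₁ and μ₀: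
    (κ₁ κ₀ : ProbabilityTheory.Kernel 𝒳 ℝ) [IsMarkovKernel κ₁] [IsMarkovKernel κ₀]
    (hκ₁ : μ₁.map (fun ω => (X ω, Y ω)) = (μ₁.map X).compProd κ₁)
    (hκ₀ : μ₀.map (fun ω => (X ω, Y ω)) = (μ₀.map X).compProd κ₀)
    (η : ℝ) (q : ℝ → ℝ) (hq : Measurable q)
    (ℓ : 𝒳 → ℝ → ℝ) (hℓ : Measurable (Function.uncurry ℓ))
    -- the exponential tilt model, for (μ₀ ∘ X⁻¹)-a.e. x:
    (htilt : ∀ᵐ x ∂(μ₀.map X),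
      (0 < ∫ y, Real.exp (η * q y) ∂(κ₁ x) ∧
        Integrable (fun y => Real.exp (η * q y)) (κ₁ x)) ∧
      κ₀ x = (κ₁ x).withDensity
        (fun y => ENNReal.ofReal
          (Real.exp (η * q y) / ∫ u, Real.exp (η * q u) ∂(κ₁ x))))
    (hint₁ : Integrable (fun ω => ℓ (X ω) (Y ω) * Real.exp (η * q (Y ω))) μ₁)
    (hint₀ : Integrable (fun ω => ℓ (X ω) (Y ω)) μ₀) :
    (fun ω => (∫ y, ℓ (X ω) y * Real.exp (η * q y) ∂(κ₁ (X ω))) /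
        (∫ y, Real.exp (η * q y) ∂(κ₁ (X ω))))
      =ᵐ[μ₀] μ₀[fun ω => ℓ (X ω) (Y ω) | MeasurableSpace.comap X inferInstance] := by
  have h1 : μ₀[fun ω => (fun p : 𝒳 × ℝ => ℓ p.1 p.2) (X ω, Y ω) | MeasurableSpace.comap X inferInstance]
      =ᵐ[μ₀] fun ω => ∫ y, (fun p : 𝒳 × ℝ => ℓ p.1 p.2) (X ω, y) ∂condDistrib Y X μ₀ (X ω) :=
    condExp_prod_ae_eq_integral_condDistrib hX hY.aemeasurable hℓ.stronglyMeasurable hint₀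
  have h2 : ∀ᵐ x ∂(μ₀.map X), κ₀ x = condDistrib Y X μ₀ x :=
    (condDistrib_ae_eq_of_measure_eq_compProd_of_measurable hX hY hκ₀).mono fun x hx => hx.symm
  have hkey : ∀ᵐ x ∂(μ₀.map X),
      (∫ y, ℓ x y * Real.exp (η * q y) ∂(κ₁ x)) / (∫ y, Real.exp (η * q y) ∂(κ₁ x))
        = ∫ y, ℓ x y ∂condDistrib Y X μ₀ x := by
    filter_upwards [htilt, h2] with x hx hx2
    obtain ⟨⟨hZpos, _⟩, htd⟩ := hx
    set Z := ∫ y, Real.exp (η * q y) ∂(κ₁ x) with hZ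
    rw [← hx2, htd]
    have hmeas : Measurable (fun y => (Real.exp (η * q y) / Z).toNNReal) :=
      ((Real.measurable_exp.comp (hq.const_mul η)).div_const Z).real_toNNReal
    calc (∫ y, ℓ x y * Real.exp (η * q y) ∂(κ₁ x)) / Z
        = ∫ y, (Real.exp (η * q y) / Z) * ℓ x y ∂(κ₁ x) := by
          rw [div_eq_inv_mul, ← integral_const_mul]
          congr 1 with y
          ring
      _ = ∫ y, (Real.exp (η * q y) / Z).toNNReal • ℓ x y ∂(κ₁ x) := by
          congr 1 with y
          rw [NNReal.smul_def, Real.coe_toNNReal _ (by positivity), smul_eq_mul]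
      _ = ∫ y, ℓ x y ∂((κ₁ x).withDensity
            (fun y => ENNReal.ofReal (Real.exp (η * q y) / Z))) := by
          rw [show (fun y => ENNReal.ofReal (Real.exp (η * q y) / Z))
              = fun y => ((Real.exp (η * q y) / Z).toNNReal : ENNReal) from rfl,
            integral_withDensity_eq_integral_smul hmeas]
  have hkey' : ∀ᵐ ω ∂μ₀,
      (∫ y, ℓ (X ω) y * Real.exp (η * q y) ∂(κ₁ (X ω))) / (∫ y, Real.exp (η * q y) ∂(κ₁ (X ω)))
        = ∫ y, ℓ (X ω) y ∂condDistrib Y X μ₀ (X ω) :=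
    ae_of_ae_map hX.aemeasurable hkey
  filter_upwards [hkey', h1] with ω hω h1ω
  exact hω.trans h1ω.symm
end

section
/- Let m : 𝒳 → ℝ be measurable such that (m·p)∘X is a version of E_μ[1_{S=1} W | σ(X)] (so m is a version of the conditional loss E[W | X, S=1]), with all displayed quantities integrable. Then the g-formula expression equals the inverse-odds weighting expression: E_{μ₀}[m(X)] = (1/μ(S=0)) · E_μ[ 1_{S=1} · ((1 − p(X))/p(X)) · W ]. -/
open MeasureTheory ProbabilityTheory Real

/-- The g-formula expression for the target-population risk equals the inverse-odds
weighting expression: with `p∘X` a version of `E_μ[1_{S=1} | σ(X)]` satisfying positivity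
and `(m·p)∘X` a version of `E_μ[1_{S=1} W | σ(X)]` (so `m` is a version of the conditional
loss `E[W | X, S=1]`), one has
`E_{μ₀}[m(X)] = (1/μ(S=0)) E_μ[1_{S=1} ((1−p(X))/p(X)) W]`. -/
theorem gformula_eq_inverse_odds_weighting
    {Ω : Type*} [MeasurableSpace Ω] {𝒳 : Type*} [MeasurableSpace 𝒳]
    (μ : Measure Ω) [IsProbabilityMeasure μ]
    (X : Ω → 𝒳) (Y : Ω → ℝ) (S : Ω → Bool)
    (hX : Measurable X) (hY : Measurable Y) (hS : Measurable S)
    (hS1 : 0 < μ {ω | S ω = true}) (hS0 : 0 < μ {ω | S ω = false})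
    (ℓ : 𝒳 → ℝ → ℝ) (hℓ : Measurable (Function.uncurry ℓ))
    (hW_int : Integrable (fun ω => ℓ (X ω) (Y ω)) μ)
    (p : 𝒳 → ℝ) (hp : Measurable p)
    (hpver : (fun ω => p (X ω)) =ᵐ[μ]
      μ[fun ω => if S ω then (1 : ℝ) else 0 | MeasurableSpace.comap X inferInstance])
    (hppos : ∀ᵐ ω ∂μ, 0 < p (X ω))
    (m : 𝒳 → ℝ) (hm : Measurable m)
    (hmver : (fun ω => m (X ω) * p (X ω)) =ᵐ[μ]
      μ[fun ω => if S ω then ℓ (X ω) (Y ω) else 0 | MeasurableSpace.comap X inferInstance])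
    (hm_int : Integrable (fun ω => m (X ω)) (μ[|{ω | S ω = false}]))
    (hm_int' : Integrable (fun ω => (1 - p (X ω)) * m (X ω)) μ)
    (hwt_int : Integrable
      (fun ω => if S ω then ((1 - p (X ω)) / p (X ω)) * ℓ (X ω) (Y ω) else 0) μ) :
    ∫ ω, m (X ω) ∂(μ[|{ω | S ω = false}])
      = (μ {ω | S ω = false}).toReal⁻¹
        * ∫ ω, if S ω then ((1 - p (X ω)) / p (X ω)) * ℓ (X ω) (Y ω) else 0 ∂μ := by
  have hmΩ : MeasurableSpace.comap X inferInstance ≤ (by infer_instance : MeasurableSpace Ω) :=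
    hX.comap_le
  have hXm : Measurable[MeasurableSpace.comap X inferInstance] X := fun t ht => ⟨t, ht, rfl⟩
  -- measurability of composites w.r.t. comap σ-algebra
  have hcomp : ∀ (g : 𝒳 → ℝ), Measurable g →
      StronglyMeasurable[MeasurableSpace.comap X inferInstance] (fun ω => g (X ω)) :=
    fun g hg => (hg.comp hXm).stronglyMeasurable
  -- m(X)*p(X) is integrable (as a version of a condexp)
  have hmp_int : Integrable (fun ω => m (X ω) * p (X ω)) μ :=
    (integrable_condExp).congr hmver.symm
  -- hence m(X) is integrable
  have hmX_int : Integrable (fun ω => m (X ω)) μ := by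
    have := hm_int'.add hmp_int
    refine this.congr (Filter.Eventually.of_forall fun ω => ?_)
    simp only [Pi.add_apply]
    ring
  -- sets
  have hAtrue : MeasurableSet {ω | S ω = true} := hS (measurableSet_singleton true)
  have hAfalse : MeasurableSet {ω | S ω = false} := hS (measurableSet_singleton false)
  -- Step B: ∫ 1_{S} m(X) dμ = ∫ m(X) p(X) dμ
  have hBmul : Integrable (fun ω => m (X ω) * (if S ω then (1:ℝ) else 0)) μ := by
    have : (fun ω => m (X ω) * (if S ω then (1:ℝ) else 0))
        = {ω | S ω = true}.indicator (fun ω => m (X ω)) := by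
      ext ω; by_cases h : S ω <;> simp [Set.indicator, h]
    rw [this]; exact hmX_int.indicator hAtrue
  have hind_int : Integrable (fun ω => if S ω then (1:ℝ) else 0) μ := by
    have : (fun ω => if S ω then (1:ℝ) else 0)
        = {ω | S ω = true}.indicator (fun _ => (1:ℝ)) := by
      ext ω; by_cases h : S ω <;> simp [Set.indicator, h]
    rw [this]; exact (integrable_const 1).indicator hAtrue
  have hB : ∫ ω, m (X ω) * (if S ω then (1:ℝ) else 0) ∂μ = ∫ ω, m (X ω) * p (X ω) ∂μ := by
    have h1 := condExp_mul_of_stronglyMeasurable_left (μ := μ) (hcomp m hm)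
      (f := fun ω => m (X ω)) (g := fun ω => if S ω then (1:ℝ) else 0) hBmul hind_int
    calc ∫ ω, m (X ω) * (if S ω then (1:ℝ) else 0) ∂μ
        = ∫ ω, (μ[(fun ω => m (X ω)) * (fun ω => if S ω then (1:ℝ) else 0)|MeasurableSpace.comap X inferInstance]) ω ∂μ := by
          rw [integral_condExp hmΩ]; rfl
      _ = ∫ ω, m (X ω) * (μ[fun ω => if S ω then (1:ℝ) else 0|MeasurableSpace.comap X inferInstance]) ω ∂μ :=
          integral_congr_ae h1
      _ = ∫ ω, m (X ω) * p (X ω) ∂μ := by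
          refine integral_congr_ae ?_
          filter_upwards [hpver] with ω hω
          rw [hω]
  -- Step C: ∫ 1_S ((1-p)/p) W dμ = ∫ (1-p(X)) m(X) dμ
  have hWind_int : Integrable (fun ω => if S ω then ℓ (X ω) (Y ω) else 0) μ := by
    have : (fun ω => if S ω then ℓ (X ω) (Y ω) else 0)
        = {ω | S ω = true}.indicator (fun ω => ℓ (X ω) (Y ω)) := by
      ext ω; by_cases h : S ω <;> simp [Set.indicator, h]
    rw [this]; exact hW_int.indicator hAtrue
  have hq : Measurable (fun x => (1 - p x) / p x) := (measurable_const.sub hp).div hp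
  have hCeq : (fun ω => if S ω then ((1 - p (X ω)) / p (X ω)) * ℓ (X ω) (Y ω) else 0)
      = (fun ω => ((1 - p (X ω)) / p (X ω)) * (if S ω then ℓ (X ω) (Y ω) else 0)) := by
    ext ω; by_cases h : S ω <;> simp [h]
  have hC : ∫ ω, (if S ω then ((1 - p (X ω)) / p (X ω)) * ℓ (X ω) (Y ω) else 0) ∂μ
      = ∫ ω, (1 - p (X ω)) * m (X ω) ∂μ := by
    have hCmul : Integrable
        (fun ω => ((1 - p (X ω)) / p (X ω)) * (if S ω then ℓ (X ω) (Y ω) else 0)) μ := by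
      rw [← hCeq]; exact hwt_int
    have h1 := condExp_mul_of_stronglyMeasurable_left (μ := μ) (hcomp _ hq)
      (f := fun ω => (1 - p (X ω)) / p (X ω))
      (g := fun ω => if S ω then ℓ (X ω) (Y ω) else 0) hCmul hWind_int
    calc ∫ ω, (if S ω then ((1 - p (X ω)) / p (X ω)) * ℓ (X ω) (Y ω) else 0) ∂μ
        = ∫ ω, ((fun ω => (1 - p (X ω)) / p (X ω))
            * (fun ω => if S ω then ℓ (X ω) (Y ω) else 0)) ω ∂μ := by rw [hCeq]; rfl
      _ = ∫ ω, (μ[(fun ω => (1 - p (X ω)) / p (X ω))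
            * (fun ω => if S ω then ℓ (X ω) (Y ω) else 0)|MeasurableSpace.comap X inferInstance]) ω ∂μ := by
          rw [integral_condExp hmΩ]
      _ = ∫ ω, ((1 - p (X ω)) / p (X ω))
            * (μ[fun ω => if S ω then ℓ (X ω) (Y ω) else 0|MeasurableSpace.comap X inferInstance]) ω ∂μ :=
          integral_congr_ae h1
      _ = ∫ ω, (1 - p (X ω)) * m (X ω) ∂μ := by
          refine integral_congr_ae ?_
          filter_upwards [hmver, hppos] with ω h1 h2
          rw [← h1]
          field_simp
  -- rewrite LHS using cond measure
  have hμ0_ne : μ {ω | S ω = false} ≠ 0 := hS0.ne'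
  have hμ0_fin : μ {ω | S ω = false} ≠ ⊤ := measure_ne_top μ _
  have hLHS : ∫ ω, m (X ω) ∂(μ[|{ω | S ω = false}])
      = (μ {ω | S ω = false}).toReal⁻¹ * ∫ ω in {ω | S ω = false}, m (X ω) ∂μ := by
    rw [ProbabilityTheory.cond, integral_smul_measure, smul_eq_mul,
      ENNReal.toReal_inv]
  rw [hLHS]
  congr 1
  -- ∫_{S=false} m(X) = ∫ (1-p(X)) m(X) = RHS
  have hrestrict : ∫ ω in {ω | S ω = false}, m (X ω) ∂μ
      = ∫ ω, m (X ω) ∂μ - ∫ ω, m (X ω) * (if S ω then (1:ℝ) else 0) ∂μ := by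
    rw [← integral_sub hmX_int hBmul]
    rw [← integral_indicator hAfalse]
    refine integral_congr_ae (Filter.Eventually.of_forall fun ω => ?_)
    by_cases h : S ω <;> simp [Set.indicator, h]
  rw [hrestrict, hB, hC]
  rw [← integral_sub hmX_int hmp_int]
  refine integral_congr_ae (Filter.Eventually.of_forall fun ω => ?_)
  ring
end

section
/- Assume Y and S are conditionally independent given σ(X) (the conditional transportability assumption A2) and positivity (A1): p(X) > 0 μ-a.s. where p∘X is a version of E_μ[1_{S=1} | σ(X)]. Let m : 𝒳 → ℝ be measurable such that (m·p)∘X is a version of E_μ[1_{S=1} W | σ(X)]. Then the target-population risk is identified: E_{μ₀}[W] = E_{μ₀}[m(X)], i.e. the expected loss in the target population equals the μ₀-expectation of the source-population conditional loss. -/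
open MeasureTheory ProbabilityTheory Real

section Aux

variable {Ω : Type*}

private lemma indicator_one_nonneg (B : Set Ω) :
    (0 : Ω → ℝ) ≤ B.indicator (fun _ => (1:ℝ)) := fun ω =>
  Set.indicator_nonneg (fun _ _ => zero_le_one) ω

/-- A conditional expectation of an indicator is a.e. bounded by 1 in norm. -/
private lemma abs_condexp_indicator_le {m mΩ : MeasurableSpace Ω} {μ : Measure Ω}
    [IsProbabilityMeasure μ]
    (hm : m ≤ mΩ) {B : Set Ω} (hB : MeasurableSet B) :
    ∀ᵐ ω ∂μ, ‖(μ[B.indicator (fun _ => (1:ℝ)) | m]) ω‖ ≤ 1 := by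
  have h0 : 0 ≤ᵐ[μ] μ[B.indicator (fun _ => (1:ℝ)) | m] :=
    condExp_nonneg (Filter.Eventually.of_forall (indicator_one_nonneg B))
  have h1 : μ[B.indicator (fun _ => (1:ℝ)) | m] ≤ᵐ[μ] μ[(fun _ => (1:ℝ)) | m] := by
    refine condExp_mono ((integrable_const (1:ℝ)).indicator hB) (integrable_const 1)
      (Filter.Eventually.of_forall fun ω => ?_)
    classical
    by_cases h : ω ∈ B <;> simp [Set.indicator, h]
  rw [condExp_const hm] at h1
  filter_upwards [h0, h1] with ω h0 h1
  simp only [Pi.zero_apply] at h0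
  rw [Real.norm_eq_abs, abs_le]
  exact ⟨by linarith, h1⟩

/-- Tower property under conditional independence: if for every `m₁`-measurable set `t`
the conditional expectation of `1_{t ∩ B}` given `m'` factorizes, then
`E[1_B | m' ⊔ m₁] = E[1_B | m']` a.e. -/
private lemma condexp_indicator_sup {m' m₁ mΩ : MeasurableSpace Ω} {μ : Measure Ω}
    [IsProbabilityMeasure μ]
    (hm' : m' ≤ mΩ) (hm₁ : m₁ ≤ mΩ)
    {B : Set Ω} (hB : MeasurableSet B)
    (hfac : ∀ t, MeasurableSet[m₁] t →
      (μ[(t ∩ B).indicator (fun _ => (1:ℝ)) | m']) =ᵐ[μ]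
        (μ[t.indicator (fun _ => (1:ℝ)) | m']) * (μ[B.indicator (fun _ => (1:ℝ)) | m'])) :
    μ[B.indicator (fun _ => (1:ℝ)) | m' ⊔ m₁] =ᵐ[μ] μ[B.indicator (fun _ => (1:ℝ)) | m'] := by
  classical
  have hm : m' ⊔ m₁ ≤ mΩ := sup_le hm' hm₁
  set g : Ω → ℝ := μ[B.indicator (fun _ => (1:ℝ)) | m'] with hg_def
  have hInd_int : Integrable (B.indicator (fun _ => (1:ℝ))) μ :=
    (integrable_const (1:ℝ)).indicator hB
  have hgbdd : ∀ᵐ ω ∂μ, ‖g ω‖ ≤ 1 := abs_condexp_indicator_le hm' hB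
  -- the π-system generating `m' ⊔ m₁`
  set C : Set (Set Ω) :=
    {s | ∃ s₁ s₂, MeasurableSet[m'] s₁ ∧ MeasurableSet[m₁] s₂ ∧ s = s₁ ∩ s₂} with hC_def
  have hgen : (m' ⊔ m₁ : MeasurableSpace Ω) = MeasurableSpace.generateFrom C := by
    refine le_antisymm (sup_le ?_ ?_) (MeasurableSpace.generateFrom_le ?_)
    · intro s hs
      exact MeasurableSpace.measurableSet_generateFrom
        ⟨s, Set.univ, hs, MeasurableSet.univ, (Set.inter_univ s).symm⟩
    · intro s hs
      exact MeasurableSpace.measurableSet_generateFrom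
        ⟨Set.univ, s, MeasurableSet.univ, hs, (Set.univ_inter s).symm⟩
    · rintro s ⟨s₁, s₂, h₁, h₂, rfl⟩
      exact ((le_sup_left : m' ≤ m' ⊔ m₁) _ h₁).inter ((le_sup_right : m₁ ≤ m' ⊔ m₁) _ h₂)
  have hpi : IsPiSystem C := by
    rintro s ⟨s₁, s₂, h₁, h₂, rfl⟩ t ⟨t₁, t₂, h₁', h₂', rfl⟩ -
    exact ⟨s₁ ∩ t₁, s₂ ∩ t₂, h₁.inter h₁', h₂.inter h₂', by
      rw [Set.inter_inter_inter_comm]⟩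
  have key : ∀ s : Set Ω, MeasurableSet[m' ⊔ m₁] s →
      ∫ x in s, g x ∂μ = (μ (B ∩ s)).toReal := by
    intro s hs
    refine MeasurableSpace.induction_on_inter (m := m' ⊔ m₁)
      (C := fun s _ => ∫ x in s, g x ∂μ = (μ (B ∩ s)).toReal) (s := C)
      hgen hpi ?_ ?_ ?_ ?_ s hs
    · simp
    · rintro u ⟨s₁, s₂, h₁, h₂, rfl⟩
      have hs₁Ω : MeasurableSet s₁ := hm' _ h₁
      have hs₂Ω : MeasurableSet s₂ := hm₁ _ h₂
      set h : Ω → ℝ := fun x => s₁.indicator (fun _ => (1:ℝ)) x * g x with hh_def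
      have hh_sm : StronglyMeasurable[m'] h :=
        ((stronglyMeasurable_const.indicator h₁).mul stronglyMeasurable_condExp)
      have hh_bdd : ∀ᵐ x ∂μ, ‖h x‖ ≤ 1 := by
        filter_upwards [hgbdd] with x hx
        rw [hh_def]
        calc ‖s₁.indicator (fun _ => (1:ℝ)) x * g x‖
            = ‖s₁.indicator (fun _ => (1:ℝ)) x‖ * ‖g x‖ := norm_mul _ _
          _ ≤ 1 * 1 := by
              refine mul_le_mul ?_ hx (norm_nonneg _) zero_le_one
              by_cases hxx : x ∈ s₁ <;> simp [Set.indicator, hxx]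
          _ = 1 := one_mul 1
      have hI2_int : Integrable (s₂.indicator (fun _ => (1:ℝ))) μ :=
        (integrable_const (1:ℝ)).indicator hs₂Ω
      have step1 : ∫ x in s₁ ∩ s₂, g x ∂μ = ∫ x, (h * s₂.indicator (fun _ => (1:ℝ))) x ∂μ := by
        rw [← integral_indicator (hs₁Ω.inter hs₂Ω)]
        refine integral_congr_ae (Filter.Eventually.of_forall fun x => ?_)
        by_cases hx1 : x ∈ s₁ <;> by_cases hx2 : x ∈ s₂ <;>
          simp [hh_def, Set.indicator, hx1, hx2]
      have step2 : ∫ x, (h * s₂.indicator (fun _ => (1:ℝ))) x ∂μ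
          = ∫ x, (h * μ[s₂.indicator (fun _ => (1:ℝ)) | m']) x ∂μ := by
        rw [← integral_condExp hm' (f := h * s₂.indicator (fun _ => (1:ℝ)))]
        exact integral_congr_ae
          (condExp_stronglyMeasurable_mul_of_bound hm' hh_sm hI2_int 1 hh_bdd)
      have step3 : ∫ x, (h * μ[s₂.indicator (fun _ => (1:ℝ)) | m']) x ∂μ
          = ∫ x, s₁.indicator (fun _ => (1:ℝ)) x * (μ[(s₂ ∩ B).indicator (fun _ => (1:ℝ)) | m']) x ∂μ := by
        refine integral_congr_ae ?_
        filter_upwards [hfac s₂ h₂] with x hx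
        simp only [Pi.mul_apply, hh_def]
        rw [hx, Pi.mul_apply]
        ring
      have step4 : ∫ x, s₁.indicator (fun _ => (1:ℝ)) x * (μ[(s₂ ∩ B).indicator (fun _ => (1:ℝ)) | m']) x ∂μ
          = (μ (B ∩ (s₁ ∩ s₂))).toReal := by
        have e1 : (fun x => s₁.indicator (fun _ => (1:ℝ)) x * (μ[(s₂ ∩ B).indicator (fun _ => (1:ℝ)) | m']) x)
            = s₁.indicator (μ[(s₂ ∩ B).indicator (fun _ => (1:ℝ)) | m']) := by
          funext x
          by_cases hx : x ∈ s₁ <;> simp [Set.indicator, hx]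
        rw [e1, integral_indicator hs₁Ω,
          setIntegral_condExp hm' ((integrable_const (1:ℝ)).indicator (hs₂Ω.inter hB)) h₁,
          integral_indicator_const (1:ℝ) (hs₂Ω.inter hB), measureReal_def, Measure.restrict_apply (hs₂Ω.inter hB)]
        have : (s₂ ∩ B) ∩ s₁ = B ∩ (s₁ ∩ s₂) := by ext x; simp [Set.mem_inter_iff]; tauto
        rw [this, smul_eq_mul, mul_one]
      rw [step1, step2, step3, step4]
    · intro t ht hind
      have htΩ : MeasurableSet t := hm _ ht
      have hint : Integrable g μ := integrable_condExp
      have hsplit : ∫ x in t, g x ∂μ + ∫ x in tᶜ, g x ∂μ = ∫ x, g x ∂μ :=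
        integral_add_compl htΩ hint
      have htot : ∫ x, g x ∂μ = (μ B).toReal := by
        rw [hg_def, integral_condExp hm', integral_indicator_const (1:ℝ) hB, smul_eq_mul, mul_one, measureReal_def]
      have hmeasB : μ (B ∩ t) + μ (B ∩ tᶜ) = μ B := by
        have := measure_inter_add_diff (μ := μ) B htΩ
        rwa [Set.diff_eq] at this
      have h1 : (μ (B ∩ t)).toReal + (μ (B ∩ tᶜ)).toReal = (μ B).toReal := by
        rw [← ENNReal.toReal_add (measure_ne_top μ _) (measure_ne_top μ _), hmeasB]
      rw [hind, htot] at hsplit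
      linarith
    · intro f hdisj hmeas hind
      have hmeasΩ : ∀ i, MeasurableSet (f i) := fun i => hm _ (hmeas i)
      rw [integral_iUnion hmeasΩ hdisj integrable_condExp.integrableOn]
      have : B ∩ ⋃ i, f i = ⋃ i, B ∩ f i := Set.inter_iUnion B f
      rw [this, measure_iUnion
          (fun i j hij => ((hdisj hij).mono Set.inter_subset_right Set.inter_subset_right))
          (fun i => hB.inter (hmeasΩ i)),
        ENNReal.tsum_toReal_eq (fun i => measure_ne_top μ _)]
      exact tsum_congr hind
  refine (ae_eq_condExp_of_forall_setIntegral_eq hm hInd_int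
    (fun s _ _ => integrable_condExp.integrableOn) (fun s hs _ => ?_)
    (StronglyMeasurable.aestronglyMeasurable (stronglyMeasurable_condExp.mono (le_sup_left : m' ≤ m' ⊔ m₁)))).symm
  rw [key s hs, integral_indicator_const (1:ℝ) hB, measureReal_def, Measure.restrict_apply hB, smul_eq_mul, mul_one]

/-- Product (pull-out) property under the tower hypothesis. -/
private lemma condexp_mul_indicator {m' m₁ mΩ : MeasurableSpace Ω} {μ : Measure Ω}
    [IsProbabilityMeasure μ]
    (hm' : m' ≤ mΩ) (hm₁ : m₁ ≤ mΩ) (hle : m' ≤ m₁)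
    {W : Ω → ℝ} (hW_sm : StronglyMeasurable[m₁] W) (hW_int : Integrable W μ)
    {B : Set Ω} (hB : MeasurableSet B)
    (hT : μ[B.indicator (fun _ => (1:ℝ)) | m₁] =ᵐ[μ] μ[B.indicator (fun _ => (1:ℝ)) | m']) :
    μ[(fun ω => W ω * B.indicator (fun _ => (1:ℝ)) ω) | m'] =ᵐ[μ]
      (μ[B.indicator (fun _ => (1:ℝ)) | m']) * (μ[W | m']) := by
  classical
  have hWI_int : Integrable (W * B.indicator (fun _ => (1:ℝ))) μ := by
    have : (W * B.indicator (fun _ => (1:ℝ))) = B.indicator W := by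
      funext x; by_cases hx : x ∈ B <;> simp [Set.indicator, hx]
    rw [this]
    exact hW_int.indicator hB
  have hI_int : Integrable (B.indicator (fun _ => (1:ℝ))) μ :=
    (integrable_const (1:ℝ)).indicator hB
  have h1 : μ[(W * B.indicator (fun _ => (1:ℝ)) : Ω → ℝ) | m'] =ᵐ[μ]
      μ[(μ[(W * B.indicator (fun _ => (1:ℝ)) : Ω → ℝ) | m₁]) | m'] :=
    (condExp_condExp_of_le hle hm₁).symm
  have h2 : μ[(W * B.indicator (fun _ => (1:ℝ)) : Ω → ℝ) | m₁] =ᵐ[μ]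
      W * (μ[B.indicator (fun _ => (1:ℝ)) | m₁]) :=
    condExp_mul_of_stronglyMeasurable_left hW_sm hWI_int hI_int
  have h3 : μ[(μ[(W * B.indicator (fun _ => (1:ℝ)) : Ω → ℝ) | m₁]) | m'] =ᵐ[μ]
      μ[(μ[B.indicator (fun _ => (1:ℝ)) | m']) * W | m'] := by
    refine condExp_congr_ae ?_
    filter_upwards [h2, hT] with x hx hxT
    simp only [Pi.mul_apply] at *
    rw [hx, hxT, mul_comm]
  have h4 : μ[(μ[B.indicator (fun _ => (1:ℝ)) | m']) * W | m'] =ᵐ[μ]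
      (μ[B.indicator (fun _ => (1:ℝ)) | m']) * (μ[W | m']) :=
    condExp_stronglyMeasurable_mul_of_bound hm' stronglyMeasurable_condExp hW_int 1
      (abs_condexp_indicator_le hm' hB)
  exact (h1.trans (h3.trans h4))

end Aux

/-- Identification of the target-population risk under conditional transportability (A2)
and positivity (A1): if `Y` and `S` are conditionally independent given `σ(X)`, `p∘X` is a
version of `E_μ[1_{S=1} | σ(X)]` with `p(X) > 0` μ-a.s., and `(m·p)∘X` is a version of
`E_μ[1_{S=1} W | σ(X)]` (so `m` is a version of the conditional loss `E[W | X, S=1]`),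
then `E_{μ₀}[W] = E_{μ₀}[m(X)]`. -/
theorem target_risk_identified_under_transportability
    {Ω : Type*} [MeasurableSpace Ω] [StandardBorelSpace Ω] [Nonempty Ω]
    {𝒳 : Type*} [MeasurableSpace 𝒳]
    (μ : Measure Ω) [IsProbabilityMeasure μ]
    (X : Ω → 𝒳) (Y : Ω → ℝ) (S : Ω → Bool)
    (hX : Measurable X) (hY : Measurable Y) (hS : Measurable S)
    (hS1 : 0 < μ {ω | S ω = true}) (hS0 : 0 < μ {ω | S ω = false})
    (ℓ : 𝒳 → ℝ → ℝ) (hℓ : Measurable (Function.uncurry ℓ))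
    (hW_int : Integrable (fun ω => ℓ (X ω) (Y ω)) μ)
    (hW_int₀ : Integrable (fun ω => ℓ (X ω) (Y ω)) (μ[|{ω | S ω = false}]))
    -- A2: conditional transportability, Y ⫫ S | σ(X)
    (hCI : ProbabilityTheory.CondIndepFun (MeasurableSpace.comap X inferInstance)
      hX.comap_le Y S μ)
    -- A1: positivity
    (p : 𝒳 → ℝ) (hp : Measurable p)
    (hpver : (fun ω => p (X ω)) =ᵐ[μ]
      μ[fun ω => if S ω then (1 : ℝ) else 0 | MeasurableSpace.comap X inferInstance])
    (hppos : ∀ᵐ ω ∂μ, 0 < p (X ω))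
    (m : 𝒳 → ℝ) (hm : Measurable m)
    (hmver : (fun ω => m (X ω) * p (X ω)) =ᵐ[μ]
      μ[fun ω => if S ω then ℓ (X ω) (Y ω) else 0 | MeasurableSpace.comap X inferInstance])
    (hm_int : Integrable (fun ω => m (X ω)) (μ[|{ω | S ω = false}])) :
    ∫ ω, ℓ (X ω) (Y ω) ∂(μ[|{ω | S ω = false}])
      = ∫ ω, m (X ω) ∂(μ[|{ω | S ω = false}]) := by
  classical
  have hm' : MeasurableSpace.comap X inferInstance ≤ ‹MeasurableSpace Ω› := hX.comap_le
  have hmY : MeasurableSpace.comap Y inferInstance ≤ ‹MeasurableSpace Ω› := hY.comap_le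
  have hm₁ : MeasurableSpace.comap X inferInstance ⊔ MeasurableSpace.comap Y inferInstance
      ≤ ‹MeasurableSpace Ω› := sup_le hm' hmY
  have hle : MeasurableSpace.comap X inferInstance
      ≤ MeasurableSpace.comap X inferInstance ⊔ MeasurableSpace.comap Y inferInstance :=
    le_sup_left
  set W : Ω → ℝ := fun ω => ℓ (X ω) (Y ω) with hW_def
  set A : Set Ω := S ⁻¹' {true} with hA_def
  have hA : MeasurableSet A := hS (measurableSet_singleton true)
  have hA_mS : MeasurableSet[MeasurableSpace.comap S inferInstance] A :=
    ⟨{true}, measurableSet_singleton true, rfl⟩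
  have hAc_mS : MeasurableSet[MeasurableSpace.comap S inferInstance] Aᶜ :=
    ⟨({true} : Set Bool)ᶜ, (measurableSet_singleton true).compl, by
      rw [Set.preimage_compl]⟩
  have hsfalse : {ω | S ω = false} = Aᶜ := by
    rw [hA_def]
    ext ω
    simp only [Set.mem_setOf_eq, Set.mem_compl_iff, Set.mem_preimage, Set.mem_singleton_iff,
      Bool.not_eq_true]
  -- set-level conditional independence
  have hsets := ((ProbabilityTheory.condIndepFun_iff (MeasurableSpace.comap X inferInstance)
    hX.comap_le Y S hY hS μ).mp hCI)
  -- tower property for indicators of A and Aᶜ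
  have hfac : ∀ (B : Set Ω), MeasurableSet[MeasurableSpace.comap S inferInstance] B →
      ∀ t, MeasurableSet[(MeasurableSpace.comap Y inferInstance)] t →
      (μ[(t ∩ B).indicator (fun _ => (1:ℝ)) | (MeasurableSpace.comap X inferInstance)]) =ᵐ[μ]
        (μ[t.indicator (fun _ => (1:ℝ)) | (MeasurableSpace.comap X inferInstance)]) * (μ[B.indicator (fun _ => (1:ℝ)) | (MeasurableSpace.comap X inferInstance)]) := by
    intro B hB t ht
    exact hsets t B ht hB
  have hTA : μ[A.indicator (fun _ => (1:ℝ)) | (MeasurableSpace.comap X inferInstance) ⊔ (MeasurableSpace.comap Y inferInstance)] =ᵐ[μ]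
      μ[A.indicator (fun _ => (1:ℝ)) | (MeasurableSpace.comap X inferInstance)] :=
    condexp_indicator_sup hm' hmY hA (hfac A hA_mS)
  have hTAc : μ[(Aᶜ).indicator (fun _ => (1:ℝ)) | (MeasurableSpace.comap X inferInstance) ⊔ (MeasurableSpace.comap Y inferInstance)] =ᵐ[μ]
      μ[(Aᶜ).indicator (fun _ => (1:ℝ)) | (MeasurableSpace.comap X inferInstance)] :=
    condexp_indicator_sup hm' hmY hA.compl (hfac Aᶜ hAc_mS)
  -- W is strongly measurable w.r.t. (MeasurableSpace.comap X inferInstance) ⊔ (MeasurableSpace.comap Y inferInstance)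
  have hXm : Measurable[(MeasurableSpace.comap X inferInstance) ⊔ (MeasurableSpace.comap Y inferInstance)] X := by
    rw [measurable_iff_comap_le]; exact le_sup_left
  have hYm : Measurable[(MeasurableSpace.comap X inferInstance) ⊔ (MeasurableSpace.comap Y inferInstance)] Y := by
    rw [measurable_iff_comap_le]; exact le_sup_right
  have hW_sm : StronglyMeasurable[(MeasurableSpace.comap X inferInstance) ⊔ (MeasurableSpace.comap Y inferInstance)] W :=
    (hℓ.comp (hXm.prodMk hYm)).stronglyMeasurable
  -- product formulas
  have hprodA : μ[(fun ω => W ω * A.indicator (fun _ => (1:ℝ)) ω) | (MeasurableSpace.comap X inferInstance)] =ᵐ[μ]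
      (μ[A.indicator (fun _ => (1:ℝ)) | (MeasurableSpace.comap X inferInstance)]) * (μ[W | (MeasurableSpace.comap X inferInstance)]) :=
    condexp_mul_indicator hm' hm₁ hle hW_sm hW_int hA hTA
  have hprodAc : μ[(fun ω => W ω * (Aᶜ).indicator (fun _ => (1:ℝ)) ω) | (MeasurableSpace.comap X inferInstance)] =ᵐ[μ]
      (μ[(Aᶜ).indicator (fun _ => (1:ℝ)) | (MeasurableSpace.comap X inferInstance)]) * (μ[W | (MeasurableSpace.comap X inferInstance)]) :=
    condexp_mul_indicator hm' hm₁ hle hW_sm hW_int hA.compl hTAc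
  -- p∘X is a version of E[1_A | (MeasurableSpace.comap X inferInstance)]
  have hpA : (fun ω => p (X ω)) =ᵐ[μ] μ[A.indicator (fun _ => (1:ℝ)) | (MeasurableSpace.comap X inferInstance)] := by
    refine hpver.trans (condExp_congr_ae (Filter.Eventually.of_forall fun ω => ?_))
    by_cases h : S ω = true <;> simp [hA_def, Set.indicator, h]
  -- m∘X is a version of E[W | (MeasurableSpace.comap X inferInstance)]
  have hmW : (fun ω => m (X ω)) =ᵐ[μ] μ[W | (MeasurableSpace.comap X inferInstance)] := by
    have h1 : (fun ω => m (X ω) * p (X ω)) =ᵐ[μ]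
        μ[(fun ω => W ω * A.indicator (fun _ => (1:ℝ)) ω) | (MeasurableSpace.comap X inferInstance)] := by
      refine hmver.trans (condExp_congr_ae (Filter.Eventually.of_forall fun ω => ?_))
      by_cases h : S ω = true <;> simp [hA_def, Set.indicator, h, hW_def]
    have h2 : (fun ω => m (X ω) * p (X ω)) =ᵐ[μ]
        (fun ω => p (X ω)) * (μ[W | (MeasurableSpace.comap X inferInstance)]) := by
      refine (h1.trans hprodA).trans ?_
      exact Filter.EventuallyEq.mul hpA.symm (by rfl)
    filter_upwards [h2, hppos] with ω hω hpos
    have : m (X ω) * p (X ω) = p (X ω) * (μ[W | (MeasurableSpace.comap X inferInstance)]) ω := hω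
    rw [mul_comm] at this
    exact mul_left_cancel₀ hpos.ne' this
  -- pass from conditional measure to restricted integrals
  have hμAc_ne : μ Aᶜ ≠ 0 := by rw [← hsfalse]; exact hS0.ne'
  have hμAc_fin : μ Aᶜ ≠ ⊤ := measure_ne_top μ _
  rw [hsfalse]
  have hcond : (μ[|Aᶜ]) = (μ Aᶜ)⁻¹ • μ.restrict Aᶜ := rfl
  rw [hcond, integral_smul_measure, integral_smul_measure]
  congr 1
  -- integrability of m∘X on Aᶜ
  have hm_restrict : Integrable (fun ω => m (X ω)) (μ.restrict Aᶜ) := by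
    have := hm_int
    rw [hsfalse, hcond, integrable_smul_measure
      (ENNReal.inv_ne_zero.mpr hμAc_fin) (ENNReal.inv_ne_top.mpr hμAc_ne)] at this
    exact this
  have hmX_sm : StronglyMeasurable[(MeasurableSpace.comap X inferInstance)] (fun ω => m (X ω)) := by
    refine Measurable.stronglyMeasurable ?_
    exact hm.comp (by rw [measurable_iff_comap_le])
  have hIc_int : Integrable ((Aᶜ).indicator (fun _ => (1:ℝ))) μ :=
    (integrable_const (1:ℝ)).indicator hA.compl
  -- LHS
  have hLHS : ∫ ω in Aᶜ, W ω ∂μ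
      = ∫ ω, (μ[(Aᶜ).indicator (fun _ => (1:ℝ)) | (MeasurableSpace.comap X inferInstance)]) ω * (μ[W | (MeasurableSpace.comap X inferInstance)]) ω ∂μ := by
    rw [← integral_indicator hA.compl]
    have e : (Aᶜ).indicator W = fun ω => W ω * (Aᶜ).indicator (fun _ => (1:ℝ)) ω := by
      funext ω; by_cases h : ω ∈ Aᶜ <;> simp [Set.indicator, h]
    rw [e, ← integral_condExp hm'
      (f := fun ω => W ω * (Aᶜ).indicator (fun _ => (1:ℝ)) ω)]
    exact integral_congr_ae hprodAc
  -- RHS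
  have hmXIc_int : Integrable ((fun ω => m (X ω)) * (Aᶜ).indicator (fun _ => (1:ℝ))) μ := by
    have e : ((fun ω => m (X ω)) * (Aᶜ).indicator (fun _ => (1:ℝ)))
        = (Aᶜ).indicator (fun ω => m (X ω)) := by
      funext ω; by_cases h : ω ∈ Aᶜ <;> simp [Set.indicator, h]
    rw [e, integrable_indicator_iff hA.compl]
    exact hm_restrict
  have hRHS : ∫ ω in Aᶜ, m (X ω) ∂μ
      = ∫ ω, (μ[(Aᶜ).indicator (fun _ => (1:ℝ)) | (MeasurableSpace.comap X inferInstance)]) ω * (μ[W | (MeasurableSpace.comap X inferInstance)]) ω ∂μ := by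
    rw [← integral_indicator hA.compl]
    have e : (Aᶜ).indicator (fun ω => m (X ω))
        = (fun ω => m (X ω)) * (Aᶜ).indicator (fun _ => (1:ℝ)) := by
      funext ω; by_cases h : ω ∈ Aᶜ <;> simp [Set.indicator, h]
    rw [e, ← integral_condExp hm'
      (f := ((fun ω => m (X ω)) * (Aᶜ).indicator (fun _ => (1:ℝ)) : Ω → ℝ))]
    refine integral_congr_ae ?_
    refine (condExp_mul_of_stronglyMeasurable_left hmX_sm hmXIc_int hIc_int).trans ?_
    filter_upwards [hmW] with ω hω
    simp only [Pi.mul_apply]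
    rw [hω, mul_comm]
  rw [hLHS, hRHS]
end

section
/- Assume positivity: p(X) > 0 μ-a.s. where p∘X is a version of E_μ[1_{S=1} | σ(X)]. Then the tilted inverse-odds weighted loss recovers the tilted g-formula functional: (1/μ(S=0)) · E_μ[ 1_{S=1} · ((1 − p(X)) · e^{η q(Y)} / (p(X) · c(X))) · W ] = E_{μ₀}[ b(X) ]. -/
open MeasureTheory ProbabilityTheory Real

section Aux

variable {Ω : Type*} [MeasurableSpace Ω] (μ : Measure Ω) [IsProbabilityMeasure μ]

/-- integral over the conditional measure vs restricted measure -/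
lemma integral_cond_eq {s : Set Ω} (hs : μ s ≠ 0) (f : Ω → ℝ) :
    ∫ ω in s, f ω ∂μ = (μ s).toReal * ∫ ω, f ω ∂(μ[|s]) := by
  rw [ProbabilityTheory.cond, integral_smul_measure, ENNReal.toReal_inv, smul_eq_mul,
    ← mul_assoc, mul_inv_cancel₀, one_mul]
  exact ENNReal.toReal_ne_zero.2 ⟨hs, measure_ne_top μ s⟩

lemma integrable_cond_iff {s : Set Ω} (hs : μ s ≠ 0) (f : Ω → ℝ) :
    Integrable f (μ[|s]) ↔ Integrable f (μ.restrict s) := by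
  constructor
  · intro h
    have := h.smul_measure (c := μ s) (measure_ne_top μ s)
    rwa [ProbabilityTheory.cond, smul_smul, ENNReal.mul_inv_cancel hs (measure_ne_top μ s),
      one_smul] at this
  · intro h
    exact h.smul_measure (by simp [hs])

end Aux

/-- Case 2 of the consistency proof for the augmented estimator (Theorem 1), first part:
at the true nuisance functions `p` (the propensity `E_μ[1_{S=1} | σ(X)]`, satisfying
positivity) and `c` (with `c∘X` a version of `E_{μ₁}[e^{η q(Y)} | σ(X)]`), the tilted
inverse-odds weighted loss recovers the tilted g-formula functional:
`(1/μ(S=0)) E_μ[1_{S=1} ((1 − p(X)) e^{η q(Y)} / (p(X) c(X))) W] = E_{μ₀}[b(X)]`. -/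
theorem tilted_weighting_recovers_gformula
    {Ω : Type*} [MeasurableSpace Ω] {𝒳 : Type*} [MeasurableSpace 𝒳]
    (μ : Measure Ω) [IsProbabilityMeasure μ]
    (X : Ω → 𝒳) (Y : Ω → ℝ) (S : Ω → Bool)
    (hX : Measurable X) (hY : Measurable Y) (hS : Measurable S)
    (hS1 : 0 < μ {ω | S ω = true}) (hS0 : 0 < μ {ω | S ω = false})
    (η : ℝ) (q : ℝ → ℝ) (hq : Measurable q)
    (ℓ : 𝒳 → ℝ → ℝ) (hℓ : Measurable (Function.uncurry ℓ))
    (c r : 𝒳 → ℝ) (hc : Measurable c) (hr : Measurable r)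
    (hexp_int : Integrable (fun ω => Real.exp (η * q (Y ω))) (μ[|{ω | S ω = true}]))
    (hWexp_int : Integrable (fun ω => ℓ (X ω) (Y ω) * Real.exp (η * q (Y ω)))
      (μ[|{ω | S ω = true}]))
    (hcver : (fun ω => c (X ω)) =ᵐ[μ[|{ω | S ω = true}]]
      (μ[|{ω | S ω = true}])[fun ω => Real.exp (η * q (Y ω)) |
        MeasurableSpace.comap X inferInstance])
    (hcpos : ∀ᵐ ω ∂(μ[|{ω | S ω = true}]), 0 < c (X ω))
    (hrver : (fun ω => r (X ω)) =ᵐ[μ[|{ω | S ω = true}]]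
      (μ[|{ω | S ω = true}])[fun ω => ℓ (X ω) (Y ω) * Real.exp (η * q (Y ω)) |
        MeasurableSpace.comap X inferInstance])
    -- the true propensity, with positivity
    (p : 𝒳 → ℝ) (hp : Measurable p)
    (hpver : (fun ω => p (X ω)) =ᵐ[μ]
      μ[fun ω => if S ω then (1 : ℝ) else 0 | MeasurableSpace.comap X inferInstance])
    (hppos : ∀ᵐ ω ∂μ, 0 < p (X ω))
    (hb_int₀ : Integrable (fun ω => r (X ω) / c (X ω)) (μ[|{ω | S ω = false}]))
    (hwt_int : Integrable (fun ω =>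
      if S ω then ((1 - p (X ω)) * Real.exp (η * q (Y ω)) / (p (X ω) * c (X ω)))
        * ℓ (X ω) (Y ω)
      else 0) μ) :
    (μ {ω | S ω = false}).toReal⁻¹
      * ∫ ω, (if S ω then ((1 - p (X ω)) * Real.exp (η * q (Y ω)) / (p (X ω) * c (X ω)))
            * ℓ (X ω) (Y ω)
          else 0) ∂μ
      = ∫ ω, r (X ω) / c (X ω) ∂(μ[|{ω | S ω = false}]) := by
  classical
  have hmX : MeasurableSpace.comap X (inferInstance : MeasurableSpace 𝒳) ≤ _ := hX.comap_le
  have hXmX : Measurable[MeasurableSpace.comap X (inferInstance : MeasurableSpace 𝒳)] X :=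
    Measurable.of_comap_le le_rfl
  set s1 : Set Ω := {ω | S ω = true} with hs1def
  set s0 : Set Ω := {ω | S ω = false} with hs0def
  have hs1m : MeasurableSet s1 := hS (measurableSet_singleton true)
  have hs0m : MeasurableSet s0 := hS (measurableSet_singleton false)
  have hμ1ne : μ s1 ≠ 0 := hS1.ne'
  have hμ0ne : μ s0 ≠ 0 := hS0.ne'
  haveI : IsProbabilityMeasure (μ[|s1]) := cond_isProbabilityMeasure hμ1ne
  haveI : IsProbabilityMeasure (μ[|s0]) := cond_isProbabilityMeasure hμ0ne
  -- auxiliary functions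
  have hg0m : Measurable fun x => (1 - p x) / (p x * c x) :=
    (measurable_const.sub hp).div (hp.mul hc)
  have hbm : Measurable fun x => r x / c x := hr.div hc
  have hh0m : Measurable fun x => (1 - p x) / p x * (r x / c x) :=
    ((measurable_const.sub hp).div hp).mul hbm
  have smg0 : StronglyMeasurable[MeasurableSpace.comap X (inferInstance : MeasurableSpace 𝒳)]
      fun ω => (1 - p (X ω)) / (p (X ω) * c (X ω)) :=
    (hg0m.comp hXmX).stronglyMeasurable
  have smh0 : StronglyMeasurable[MeasurableSpace.comap X (inferInstance : MeasurableSpace 𝒳)]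
      fun ω => (1 - p (X ω)) / p (X ω) * (r (X ω) / c (X ω)) :=
    (hh0m.comp hXmX).stronglyMeasurable
  have smb : StronglyMeasurable[MeasurableSpace.comap X (inferInstance : MeasurableSpace 𝒳)]
      fun ω => r (X ω) / c (X ω) :=
    (hbm.comp hXmX).stronglyMeasurable
  -- pointwise identity for the weighted integrand
  have hpt : ∀ ω, (if S ω then ((1 - p (X ω)) * Real.exp (η * q (Y ω)) / (p (X ω) * c (X ω)))
        * ℓ (X ω) (Y ω) else 0)
      = s1.indicator (fun ω => ((1 - p (X ω)) / (p (X ω) * c (X ω)))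
          * (ℓ (X ω) (Y ω) * Real.exp (η * q (Y ω)))) ω := by
    intro ω
    cases hs : S ω <;> simp [Set.indicator, hs1def, hs]
    ring
  -- integrability of the tilted weighted loss under μ₁
  have hFint1 : Integrable (fun ω => ((1 - p (X ω)) / (p (X ω) * c (X ω)))
      * (ℓ (X ω) (Y ω) * Real.exp (η * q (Y ω)))) (μ[|s1]) := by
    have h1 : IntegrableOn (fun ω => ((1 - p (X ω)) / (p (X ω) * c (X ω)))
        * (ℓ (X ω) (Y ω) * Real.exp (η * q (Y ω)))) s1 μ :=
      (integrable_indicator_iff hs1m).1 (hwt_int.congr (Filter.Eventually.of_forall hpt))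
    exact (integrable_cond_iff μ hμ1ne _).2 h1
  -- pull-out property under μ₁
  have hpull1 := condExp_mul_of_stronglyMeasurable_left (μ := μ[|s1]) smg0
    (g := fun ω => ℓ (X ω) (Y ω) * Real.exp (η * q (Y ω)))
    (by exact hFint1) hWexp_int
  have hae1 : (μ[|s1])[(fun ω => (1 - p (X ω)) / (p (X ω) * c (X ω)))
        * (fun ω => ℓ (X ω) (Y ω) * Real.exp (η * q (Y ω))) |
        MeasurableSpace.comap X (inferInstance : MeasurableSpace 𝒳)]
      =ᵐ[μ[|s1]] fun ω => (1 - p (X ω)) / p (X ω) * (r (X ω) / c (X ω)) := by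
    refine hpull1.trans ?_
    filter_upwards [hrver] with ω hω
    simp only [Pi.mul_apply]
    rw [← hω, div_mul_eq_mul_div, div_mul_div_comm]
  have hInt_h0μ1 : Integrable (fun ω => (1 - p (X ω)) / p (X ω) * (r (X ω) / c (X ω)))
      (μ[|s1]) := integrable_condExp.congr hae1
  have chain1 : ∫ ω, ((1 - p (X ω)) / (p (X ω) * c (X ω)))
        * (ℓ (X ω) (Y ω) * Real.exp (η * q (Y ω))) ∂(μ[|s1])
      = ∫ ω, (1 - p (X ω)) / p (X ω) * (r (X ω) / c (X ω)) ∂(μ[|s1]) := by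
    calc ∫ ω, ((1 - p (X ω)) / (p (X ω) * c (X ω)))
            * (ℓ (X ω) (Y ω) * Real.exp (η * q (Y ω))) ∂(μ[|s1])
        = ∫ ω, ((μ[|s1])[(fun ω => (1 - p (X ω)) / (p (X ω) * c (X ω)))
            * (fun ω => ℓ (X ω) (Y ω) * Real.exp (η * q (Y ω))) |
            MeasurableSpace.comap X (inferInstance : MeasurableSpace 𝒳)]) ω ∂(μ[|s1]) :=
          (integral_condExp hmX).symm
      _ = ∫ ω, (1 - p (X ω)) / p (X ω) * (r (X ω) / c (X ω)) ∂(μ[|s1]) :=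
          integral_congr_ae hae1
  -- key1 : original integral equals μ(s1) times integral of the tilted conditional loss
  have key1 : ∫ ω, (if S ω then ((1 - p (X ω)) * Real.exp (η * q (Y ω)) / (p (X ω) * c (X ω)))
        * ℓ (X ω) (Y ω) else 0) ∂μ
      = (μ s1).toReal * ∫ ω, (1 - p (X ω)) / p (X ω) * (r (X ω) / c (X ω)) ∂(μ[|s1]) := by
    rw [integral_congr_ae (Filter.Eventually.of_forall hpt), integral_indicator hs1m,
      integral_cond_eq μ hμ1ne, chain1]
  -- indicator of s1 as a product
  have hI1int : Integrable (fun ω => if S ω then (1 : ℝ) else 0) μ := by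
    have h : (fun ω => if S ω then (1 : ℝ) else 0) = s1.indicator fun _ => (1 : ℝ) := by
      funext ω; cases hs : S ω <;> simp [Set.indicator, hs1def, hs]
    rw [h]; exact (integrable_const 1).indicator hs1m
  have hind1 : s1.indicator (fun ω => (1 - p (X ω)) / p (X ω) * (r (X ω) / c (X ω)))
      = (fun ω => (1 - p (X ω)) / p (X ω) * (r (X ω) / c (X ω)))
        * fun ω => if S ω then (1 : ℝ) else 0 := by
    funext ω; cases hs : S ω <;> simp [Set.indicator, hs1def, hs]
  have hprod1_int : Integrable ((fun ω => (1 - p (X ω)) / p (X ω) * (r (X ω) / c (X ω)))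
      * fun ω => if S ω then (1 : ℝ) else 0) μ :=
    hind1 ▸ (integrable_indicator_iff hs1m).2 ((integrable_cond_iff μ hμ1ne _).1 hInt_h0μ1)
  have hpull2 := condExp_mul_of_stronglyMeasurable_left (μ := μ) smh0 hprod1_int hI1int
  -- key2 : back to μ, replacing the indicator by the propensity
  have key2 : (μ s1).toReal * ∫ ω, (1 - p (X ω)) / p (X ω) * (r (X ω) / c (X ω)) ∂(μ[|s1])
      = ∫ ω, ((1 - p (X ω)) / p (X ω) * (r (X ω) / c (X ω))) * p (X ω) ∂μ := by
    calc (μ s1).toReal * ∫ ω, (1 - p (X ω)) / p (X ω) * (r (X ω) / c (X ω)) ∂(μ[|s1])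
        = ∫ ω in s1, (1 - p (X ω)) / p (X ω) * (r (X ω) / c (X ω)) ∂μ :=
          (integral_cond_eq μ hμ1ne _).symm
      _ = ∫ ω, s1.indicator (fun ω => (1 - p (X ω)) / p (X ω) * (r (X ω) / c (X ω))) ω ∂μ :=
          (integral_indicator hs1m).symm
      _ = ∫ ω, ((fun ω => (1 - p (X ω)) / p (X ω) * (r (X ω) / c (X ω)))
            * fun ω => if S ω then (1 : ℝ) else 0) ω ∂μ :=
          integral_congr_ae (Filter.Eventually.of_forall fun ω => congrFun hind1 ω)
      _ = ∫ ω, (μ[(fun ω => (1 - p (X ω)) / p (X ω) * (r (X ω) / c (X ω)))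
            * fun ω => if S ω then (1 : ℝ) else 0 |
            MeasurableSpace.comap X (inferInstance : MeasurableSpace 𝒳)]) ω ∂μ :=
          (integral_condExp hmX).symm
      _ = ∫ ω, ((1 - p (X ω)) / p (X ω) * (r (X ω) / c (X ω))) * p (X ω) ∂μ := by
          refine integral_congr_ae (hpull2.trans ?_)
          filter_upwards [hpver] with ω hω
          simp only [Pi.mul_apply]
          rw [← hω]
  -- key3 : cancel p using positivity
  have key3 : ∫ ω, ((1 - p (X ω)) / p (X ω) * (r (X ω) / c (X ω))) * p (X ω) ∂μ
      = ∫ ω, (r (X ω) / c (X ω)) * (1 - p (X ω)) ∂μ := by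
    refine integral_congr_ae ?_
    filter_upwards [hppos] with ω hω
    have h : (1 - p (X ω)) / p (X ω) * (r (X ω) / c (X ω)) * p (X ω)
        = (r (X ω) / c (X ω)) * ((1 - p (X ω)) / p (X ω) * p (X ω)) := by ring
    rw [h, div_mul_cancel₀ _ hω.ne']
  -- indicator of s0 and its conditional expectation
  have hI0int : Integrable (fun ω => if S ω then (0 : ℝ) else 1) μ := by
    have h : (fun ω => if S ω then (0 : ℝ) else 1) = s0.indicator fun _ => (1 : ℝ) := by
      funext ω; cases hs : S ω <;> simp [Set.indicator, hs0def, hs]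
    rw [h]; exact (integrable_const 1).indicator hs0m
  have hcond0 : μ[(fun ω => if S ω then (0 : ℝ) else 1) |
        MeasurableSpace.comap X (inferInstance : MeasurableSpace 𝒳)] =ᵐ[μ]
      fun ω => 1 - p (X ω) := by
    have hI0 : (fun ω => if S ω then (0 : ℝ) else 1)
        = (fun _ => (1 : ℝ)) - fun ω => if S ω then (1 : ℝ) else 0 := by
      funext ω; cases hs : S ω <;> simp [hs]
    rw [hI0]
    refine (condExp_sub (integrable_const (1 : ℝ)) hI1int _).trans ?_
    filter_upwards [hpver] with ω hω
    simp only [Pi.sub_apply]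
    rw [condExp_const hmX, ← hω]
  have hind0 : s0.indicator (fun ω => r (X ω) / c (X ω))
      = (fun ω => r (X ω) / c (X ω)) * fun ω => if S ω then (0 : ℝ) else 1 := by
    funext ω; cases hs : S ω <;> simp [Set.indicator, hs0def, hs]
  have hprod0_int : Integrable ((fun ω => r (X ω) / c (X ω))
      * fun ω => if S ω then (0 : ℝ) else 1) μ :=
    hind0 ▸ (integrable_indicator_iff hs0m).2 ((integrable_cond_iff μ hμ0ne _).1 hb_int₀)
  have hpull3 := condExp_mul_of_stronglyMeasurable_left (μ := μ) smb hprod0_int hI0int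
  -- key4 : back to the S = 0 conditional measure
  have key4 : ∫ ω, (r (X ω) / c (X ω)) * (1 - p (X ω)) ∂μ
      = (μ s0).toReal * ∫ ω, r (X ω) / c (X ω) ∂(μ[|s0]) := by
    calc ∫ ω, (r (X ω) / c (X ω)) * (1 - p (X ω)) ∂μ
        = ∫ ω, (μ[(fun ω => r (X ω) / c (X ω)) * fun ω => if S ω then (0 : ℝ) else 1 |
            MeasurableSpace.comap X (inferInstance : MeasurableSpace 𝒳)]) ω ∂μ := by
          refine (integral_congr_ae (hpull3.trans ?_)).symm
          filter_upwards [hcond0] with ω hω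
          simp only [Pi.mul_apply]
          rw [hω]
      _ = ∫ ω, ((fun ω => r (X ω) / c (X ω)) * fun ω => if S ω then (0 : ℝ) else 1) ω ∂μ :=
          integral_condExp hmX
      _ = ∫ ω, s0.indicator (fun ω => r (X ω) / c (X ω)) ω ∂μ :=
          integral_congr_ae (Filter.Eventually.of_forall fun ω => (congrFun hind0 ω).symm)
      _ = ∫ ω in s0, r (X ω) / c (X ω) ∂μ := integral_indicator hs0m
      _ = (μ s0).toReal * ∫ ω, r (X ω) / c (X ω) ∂(μ[|s0]) := integral_cond_eq μ hμ0ne _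
  rw [key1, key2, key3, key4, ← mul_assoc, inv_mul_cancel₀, one_mul]
  exact (ENNReal.toReal_pos hμ0ne (measure_ne_top μ s0)).ne'
end

section
/- Assume positivity: p(X) > 0 μ-a.s. where p∘X is a version of E_μ[1_{S=1} | σ(X)]. Then for every measurable b* : 𝒳 → ℝ making the displayed integrands μ-integrable: E_μ[ 1_{S=1} · ((1 − p(X)) · e^{η q(Y)} / (p(X) · c(X))) · b*(X) ] = E_μ[ 1_{S=0} · b*(X) ]. -/
open MeasureTheory ProbabilityTheory Real

/-- Case 2 of the consistency proof for the augmented estimator (Theorem 1), second part: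
the true-nuisance tilted weights transport any covariate function `b*` from the source
population to the target population:
`E_μ[1_{S=1} ((1 − p(X)) e^{η q(Y)} / (p(X) c(X))) b*(X)] = E_μ[1_{S=0} b*(X)]`. -/
theorem tilted_weights_transport_covariate_functions
    {Ω : Type*} [MeasurableSpace Ω] {𝒳 : Type*} [MeasurableSpace 𝒳]
    (μ : Measure Ω) [IsProbabilityMeasure μ]
    (X : Ω → 𝒳) (Y : Ω → ℝ) (S : Ω → Bool)
    (hX : Measurable X) (hY : Measurable Y) (hS : Measurable S)
    (hS1 : 0 < μ {ω | S ω = true}) (hS0 : 0 < μ {ω | S ω = false})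
    (η : ℝ) (q : ℝ → ℝ) (hq : Measurable q)
    (c : 𝒳 → ℝ) (hc : Measurable c)
    (hexp_int : Integrable (fun ω => Real.exp (η * q (Y ω))) (μ[|{ω | S ω = true}]))
    (hcver : (fun ω => c (X ω)) =ᵐ[μ[|{ω | S ω = true}]]
      (μ[|{ω | S ω = true}])[fun ω => Real.exp (η * q (Y ω)) |
        MeasurableSpace.comap X inferInstance])
    (hcpos : ∀ᵐ ω ∂(μ[|{ω | S ω = true}]), 0 < c (X ω))
    -- the true propensity, with positivity
    (p : 𝒳 → ℝ) (hp : Measurable p)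
    (hpver : (fun ω => p (X ω)) =ᵐ[μ]
      μ[fun ω => if S ω then (1 : ℝ) else 0 | MeasurableSpace.comap X inferInstance])
    (hppos : ∀ᵐ ω ∂μ, 0 < p (X ω))
    -- an arbitrary measurable covariate function b*
    (bstar : 𝒳 → ℝ) (hbstar : Measurable bstar)
    (hwt_int : Integrable (fun ω =>
      if S ω then ((1 - p (X ω)) * Real.exp (η * q (Y ω)) / (p (X ω) * c (X ω)))
        * bstar (X ω)
      else 0) μ)
    (hbstar_int : Integrable (fun ω => if S ω then 0 else bstar (X ω)) μ) :
    ∫ ω, (if S ω then ((1 - p (X ω)) * Real.exp (η * q (Y ω)) / (p (X ω) * c (X ω)))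
          * bstar (X ω)
        else 0) ∂μ
      = ∫ ω, (if S ω then 0 else bstar (X ω)) ∂μ := by
  classical
  set s : Set Ω := {ω | S ω = true} with hs_def
  have hsm : MeasurableSet s := hS (measurableSet_singleton true)
  have hμs0 : μ s ≠ 0 := hS1.ne'
  have hμsT : μ s ≠ ⊤ := measure_ne_top μ s
  have hμsinv0 : (μ s)⁻¹ ≠ 0 := by simp [hμsT]
  have hμsinvT : (μ s)⁻¹ ≠ ⊤ := by simp [hμs0]
  have hm : MeasurableSpace.comap X inferInstance ≤ _ := hX.comap_le
  haveI hP1 : IsProbabilityMeasure (μ[|s]) := cond_isProbabilityMeasure hμs0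
  have hac : μ[|s] ≪ μ := cond_absolutelyContinuous
  have hXm : Measurable[MeasurableSpace.comap X inferInstance] X := Measurable.of_comap_le le_rfl
  set e : Ω → ℝ := fun ω => Real.exp (η * q (Y ω)) with he_def
  set f : Ω → ℝ := fun ω => (1 - p (X ω)) / (p (X ω) * c (X ω)) * bstar (X ω) with hf_def
  set h : Ω → ℝ := fun ω => (1 - p (X ω)) / p (X ω) * bstar (X ω) with hh_def
  set k : Ω → ℝ := fun ω => (1 - p (X ω)) * bstar (X ω) with hk_def
  set ind : Ω → ℝ := fun ω => if S ω then (1 : ℝ) else 0 with hind_def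
  have hfm : StronglyMeasurable[MeasurableSpace.comap X inferInstance] f :=
    ((((measurable_const.sub hp).div (hp.mul hc)).mul hbstar).comp hXm).stronglyMeasurable
  have hhm : StronglyMeasurable[MeasurableSpace.comap X inferInstance] h :=
    ((((measurable_const.sub hp).div hp).mul hbstar).comp hXm).stronglyMeasurable
  have hbm : StronglyMeasurable[MeasurableSpace.comap X inferInstance] (fun ω => bstar (X ω)) :=
    (hbstar.comp hXm).stronglyMeasurable
  -- the weighted integrand as an indicator of f * e
  have hwt_eq : (fun ω =>
      if S ω then ((1 - p (X ω)) * e ω / (p (X ω) * c (X ω))) * bstar (X ω) else 0)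
      = s.indicator (f * e) := by
    funext ω
    simp only [Set.indicator_apply, hs_def, Set.mem_setOf_eq, Pi.mul_apply]
    by_cases hω : S ω = true
    · simp only [hω, if_true]; ring
    · simp [hω]
  have hInt_fe_res : Integrable (f * e) (μ.restrict s) := by
    rw [← IntegrableOn, ← integrable_indicator_iff hsm, ← hwt_eq]
    exact hwt_int
  have hInt_fe : Integrable (f * e) (μ[|s]) := by
    rw [show μ[|s] = (μ s)⁻¹ • μ.restrict s from rfl]
    exact hInt_fe_res.smul_measure hμsinvT
  have hmul1 : (μ[|s])[f * e|MeasurableSpace.comap X inferInstance] =ᵐ[μ[|s]] f * (μ[|s])[e|MeasurableSpace.comap X inferInstance] :=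
    condExp_mul_of_stronglyMeasurable_left hfm hInt_fe hexp_int
  have hfc : f * (μ[|s])[e|MeasurableSpace.comap X inferInstance] =ᵐ[μ[|s]] h := by
    filter_upwards [hcpos, hac.ae_le hppos, hcver] with ω hcω hpω hcv
    have hc0 : c (X ω) ≠ 0 := ne_of_gt hcω
    have hp0 : p (X ω) ≠ 0 := ne_of_gt hpω
    simp only [Pi.mul_apply, hf_def, hh_def, ← hcv]
    field_simp
  have step3 : ∫ ω, (f * e) ω ∂(μ[|s]) = ∫ ω, h ω ∂(μ[|s]) := by
    rw [← integral_condExp hm]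
    exact integral_congr_ae (hmul1.trans hfc)
  have hInt_h : Integrable h (μ[|s]) :=
    (integrable_condExp (f := f * e)).congr (hmul1.trans hfc)
  have hInt_h_res : Integrable h (μ.restrict s) := by
    refine (integrable_smul_measure hμsinv0 hμsinvT).mp ?_
    rw [show (μ s)⁻¹ • μ.restrict s = μ[|s] from rfl]
    exact hInt_h
  have hres_eq : ∫ ω, (f * e) ω ∂(μ.restrict s) = ∫ ω, h ω ∂(μ.restrict s) := by
    have h1 : ∫ ω, (f * e) ω ∂(μ[|s]) = ((μ s)⁻¹).toReal • ∫ ω, (f * e) ω ∂(μ.restrict s) := by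
      rw [show μ[|s] = (μ s)⁻¹ • μ.restrict s from rfl, integral_smul_measure]
    have h2 : ∫ ω, h ω ∂(μ[|s]) = ((μ s)⁻¹).toReal • ∫ ω, h ω ∂(μ.restrict s) := by
      rw [show μ[|s] = (μ s)⁻¹ • μ.restrict s from rfl, integral_smul_measure]
    have hne : ((μ s)⁻¹).toReal ≠ 0 :=
      ENNReal.toReal_ne_zero.mpr ⟨hμsinv0, hμsinvT⟩
    have := step3
    rw [h1, h2, smul_eq_mul, smul_eq_mul] at this
    exact mul_left_cancel₀ hne this
  -- LHS equals ∫ h * ind dμ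
  have hLHS : ∫ ω, (if S ω then ((1 - p (X ω)) * e ω / (p (X ω) * c (X ω)))
        * bstar (X ω) else 0) ∂μ = ∫ ω, (h * ind) ω ∂μ := by
    have hhind : (h * ind) = s.indicator h := by
      funext ω
      by_cases hω : S ω = true <;>
        simp [Set.indicator_apply, hs_def, hω, hind_def]
    rw [hwt_eq, integral_indicator hsm, hres_eq, hhind, integral_indicator hsm]
  have hInt_ind : Integrable ind μ := by
    have : ind = s.indicator (fun _ => (1 : ℝ)) := by
      funext ω
      by_cases hω : S ω = true <;> simp [Set.indicator_apply, hs_def, hω, hind_def]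
    rw [this]
    exact (integrable_const 1).indicator hsm
  have hInt_hind : Integrable (h * ind) μ := by
    have hhind : (h * ind) = s.indicator h := by
      funext ω
      by_cases hω : S ω = true <;>
        simp [Set.indicator_apply, hs_def, hω, hind_def]
    rw [hhind, integrable_indicator_iff hsm]
    exact hInt_h_res
  have hmul2 : μ[h * ind|MeasurableSpace.comap X inferInstance] =ᵐ[μ] h * μ[ind|MeasurableSpace.comap X inferInstance] :=
    condExp_mul_of_stronglyMeasurable_left hhm hInt_hind hInt_ind
  have hhp : h * μ[ind|MeasurableSpace.comap X inferInstance] =ᵐ[μ] k := by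
    filter_upwards [hppos, hpver] with ω hpω hpv
    have hp0 : p (X ω) ≠ 0 := ne_of_gt hpω
    simp only [Pi.mul_apply, hh_def, hk_def, ← hpv]
    field_simp
  have hLHS2 : ∫ ω, (h * ind) ω ∂μ = ∫ ω, k ω ∂μ := by
    rw [← integral_condExp hm]
    exact integral_congr_ae (hmul2.trans hhp)
  -- RHS
  set ind0 : Ω → ℝ := fun ω => if S ω then (0 : ℝ) else 1 with hind0_def
  have hInt_ind0 : Integrable ind0 μ := by
    have : ind0 = sᶜ.indicator (fun _ => (1 : ℝ)) := by
      funext ω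
      by_cases hω : S ω = true <;> simp [Set.indicator_apply, hs_def, hω, hind0_def]
    rw [this]
    exact (integrable_const 1).indicator hsm.compl
  have hRHS_eq : (fun ω => if S ω then (0 : ℝ) else bstar (X ω))
      = (fun ω => bstar (X ω)) * ind0 := by
    funext ω
    by_cases hω : S ω = true <;> simp [hω, hind0_def]
  have hInt_bind0 : Integrable ((fun ω => bstar (X ω)) * ind0) μ := by
    rw [← hRHS_eq]; exact hbstar_int
  have hmul3 : μ[(fun ω => bstar (X ω)) * ind0|MeasurableSpace.comap X inferInstance]
      =ᵐ[μ] (fun ω => bstar (X ω)) * μ[ind0|MeasurableSpace.comap X inferInstance] :=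
    condExp_mul_of_stronglyMeasurable_left hbm hInt_bind0 hInt_ind0
  have hind0_sub : ind0 = (fun _ => (1 : ℝ)) - ind := by
    funext ω
    by_cases hω : S ω = true <;> simp [hω, hind_def, hind0_def]
  have hcond0 : μ[ind0|MeasurableSpace.comap X inferInstance] =ᵐ[μ] fun ω => 1 - p (X ω) := by
    rw [hind0_sub]
    calc μ[(fun _ => (1:ℝ)) - ind|MeasurableSpace.comap X inferInstance]
        =ᵐ[μ] μ[fun _ => (1:ℝ)|MeasurableSpace.comap X inferInstance] - μ[ind|MeasurableSpace.comap X inferInstance] := condExp_sub (integrable_const 1) hInt_ind _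
      _ =ᵐ[μ] fun ω => 1 - p (X ω) := by
          rw [condExp_const hm]
          filter_upwards [hpver] with ω hpv
          simp [Pi.sub_apply, ← hpv]
  have hRHS : ∫ ω, (if S ω then (0:ℝ) else bstar (X ω)) ∂μ = ∫ ω, k ω ∂μ := by
    rw [hRHS_eq, ← integral_condExp hm]
    refine integral_congr_ae (hmul3.trans ?_)
    filter_upwards [hcond0] with ω h0
    simp only [Pi.mul_apply, hk_def, h0]
    ring
  rw [hLHS, hLHS2, hRHS]
end

section
/- Let Y take values in {0,1}, let q be the identity, and let g : 𝒳 → (0,1) be measurable with g∘X a version of E_{μ₁}[Y | σ(X)] (the true outcome model P[Y=1 | X, S=1]). Define b(x) = (ℓ(x,1) e^{η} g(x) + ℓ(x,0)(1 − g(x))) / (e^{η} g(x) + 1 − g(x)). Then for every measurable p* : 𝒳 → ℝ with 0 < p*(X) ≤ 1 μ-a.s. (whether or not p* equals the true propensity P[S=1|X]), (1/μ(S=0)) · E_μ[ 1_{S=0} · b(X) + 1_{S=1} · ((1 − p*(X)) e^{η Y} / (p*(X) · (e^{η} g(X) + 1 − g(X)))) · (ℓ(X,Y) − b(X)) ] =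 E_{μ₀}[ b(X) ], i.e. the population augmented functional with a correctly specified outcome model equals the identified target-population risk φ(η) regardless of the propensity model. -/
open MeasureTheory ProbabilityTheory Real

/-- Population content of Theorem 2 (binary outcome): with a correctly specified outcome
model `g` (a version of `P[Y = 1 | X, S = 1]` with values in `(0,1)`), the augmented
functional equals the identified target-population risk `E_{μ₀}[b(X)]` for *every*
propensity model `p*` with `0 < p*(X) ≤ 1` a.s., whether or not `p*` equals the true
propensity `P[S=1|X]`. Here `q` is the identity and
`b(x) = (ℓ(x,1) e^η g(x) + ℓ(x,0)(1 − g(x))) / (e^η g(x) + 1 − g(x))`. -/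
theorem augmented_functional_robust_to_propensity_binary
    {Ω : Type*} [MeasurableSpace Ω] {𝒳 : Type*} [MeasurableSpace 𝒳]
    (μ : Measure Ω) [IsProbabilityMeasure μ]
    (X : Ω → 𝒳) (Y : Ω → ℝ) (S : Ω → Bool)
    (hX : Measurable X) (hY : Measurable Y) (hS : Measurable S)
    (hY01 : ∀ ω, Y ω = 0 ∨ Y ω = 1)
    (hS1 : 0 < μ {ω | S ω = true}) (hS0 : 0 < μ {ω | S ω = false})
    (η : ℝ)
    (ℓ : 𝒳 → ℝ → ℝ) (hℓ : Measurable (Function.uncurry ℓ))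
    -- correctly specified outcome model: g∘X is a version of E_{μ₁}[Y | σ(X)]
    (g : 𝒳 → ℝ) (hg : Measurable g) (hg01 : ∀ x, 0 < g x ∧ g x < 1)
    (hgver : (fun ω => g (X ω)) =ᵐ[μ[|{ω | S ω = true}]]
      (μ[|{ω | S ω = true}])[Y | MeasurableSpace.comap X inferInstance])
    -- the induced tilted conditional loss b
    (b : 𝒳 → ℝ)
    (hb : ∀ x, b x = (ℓ x 1 * Real.exp η * g x + ℓ x 0 * (1 - g x))
      / (Real.exp η * g x + (1 - g x)))
    -- arbitrary (possibly misspecified) propensity model p*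
    (pstar : 𝒳 → ℝ) (hpstar : Measurable pstar)
    (hpstar01 : ∀ᵐ ω ∂μ, 0 < pstar (X ω) ∧ pstar (X ω) ≤ 1)
    (hW_int₁ : Integrable (fun ω => ℓ (X ω) (Y ω)) (μ[|{ω | S ω = true}]))
    (hWexp_int₁ : Integrable (fun ω => ℓ (X ω) (Y ω) * Real.exp (η * Y ω))
      (μ[|{ω | S ω = true}]))
    (hb_int₀ : Integrable (fun ω => b (X ω)) (μ[|{ω | S ω = false}]))
    (hintegrand : Integrable (fun ω =>
      if S ω then
        ((1 - pstar (X ω)) * Real.exp (η * Y ω)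
          / (pstar (X ω) * (Real.exp η * g (X ω) + (1 - g (X ω)))))
          * (ℓ (X ω) (Y ω) - b (X ω))
      else b (X ω)) μ) :
    (μ {ω | S ω = false}).toReal⁻¹
      * ∫ ω, (if S ω then
            ((1 - pstar (X ω)) * Real.exp (η * Y ω)
              / (pstar (X ω) * (Real.exp η * g (X ω) + (1 - g (X ω)))))
              * (ℓ (X ω) (Y ω) - b (X ω))
          else b (X ω)) ∂μ
      = ∫ ω, b (X ω) ∂(μ[|{ω | S ω = false}]) := by
  classical
  set T : Set Ω := {ω | S ω = true} with hTdef
  set F : Set Ω := {ω | S ω = false} with hFdef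
  have hT : MeasurableSet T := hS (measurableSet_singleton true)
  have hTc : Tᶜ = F := by
    ext ω; simp [hTdef, hFdef, Bool.not_eq_true]
  have hμT : μ T ≠ 0 := hS1.ne'
  have hμT_top : μ T ≠ ⊤ := (measure_lt_top μ T).ne
  -- measurability of b and of the pull-out factor c
  have hℓ1 : Measurable fun x => ℓ x 1 :=
    hℓ.comp (measurable_id.prodMk measurable_const)
  have hℓ0 : Measurable fun x => ℓ x 0 :=
    hℓ.comp (measurable_id.prodMk measurable_const)
  have hbmeas : Measurable b := by
    have hbe : b = fun x => (ℓ x 1 * Real.exp η * g x + ℓ x 0 * (1 - g x))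
        / (Real.exp η * g x + (1 - g x)) := funext hb
    rw [hbe]
    exact (((hℓ1.mul_const _).mul hg).add (hℓ0.mul (measurable_const.sub hg))).div
      ((measurable_const.mul hg).add (measurable_const.sub hg))
  set c : 𝒳 → ℝ := fun x =>
    (1 - pstar x) / (pstar x * (Real.exp η * g x + (1 - g x))) *
      (Real.exp η * (ℓ x 1 - b x) - (ℓ x 0 - b x)) with hcdef
  have hcmeas : Measurable c := by
    exact ((measurable_const.sub hpstar).div
        (hpstar.mul ((measurable_const.mul hg).add (measurable_const.sub hg)))).mul
      ((measurable_const.mul (hℓ1.sub hbmeas)).sub (hℓ0.sub hbmeas))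
  -- pointwise identity
  have key : ∀ ω,
      ((1 - pstar (X ω)) * Real.exp (η * Y ω)
        / (pstar (X ω) * (Real.exp η * g (X ω) + (1 - g (X ω)))))
        * (ℓ (X ω) (Y ω) - b (X ω)) = c (X ω) * (Y ω - g (X ω)) := by
    intro ω
    have h1 := (hg01 (X ω)).1
    have h2 := (hg01 (X ω)).2
    have hD : Real.exp η * g (X ω) + (1 - g (X ω)) ≠ 0 := by
      have := Real.exp_pos η; nlinarith
    rcases hY01 ω with h | h <;> rw [h]
    · have inner0 : ℓ (X ω) 0 - b (X ω)
          = (Real.exp η * (ℓ (X ω) 1 - b (X ω)) - (ℓ (X ω) 0 - b (X ω)))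
            * (0 - g (X ω)) := by
        rw [hb (X ω)]; field_simp; ring
      simp only [mul_zero, Real.exp_zero, hcdef]
      linear_combination ((1 - pstar (X ω)) /
        (pstar (X ω) * (Real.exp η * g (X ω) + (1 - g (X ω))))) * inner0
    · have inner1 : Real.exp η * (ℓ (X ω) 1 - b (X ω))
          = (Real.exp η * (ℓ (X ω) 1 - b (X ω)) - (ℓ (X ω) 0 - b (X ω)))
            * (1 - g (X ω)) := by
        rw [hb (X ω)]; field_simp; ring
      simp only [mul_one, hcdef]
      linear_combination ((1 - pstar (X ω)) /
        (pstar (X ω) * (Real.exp η * g (X ω) + (1 - g (X ω))))) * inner1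
  -- the conditional measure on S = 1
  set ν : Measure Ω := μ[|T] with hνdef
  haveI hνprob : IsProbabilityMeasure ν := cond_isProbabilityMeasure hμT
  set m : MeasurableSpace Ω := MeasurableSpace.comap X inferInstance with hmdef
  have hm := hX.comap_le
  have hXm : Measurable[m] X := comap_measurable X
  have hφm : StronglyMeasurable[m] fun ω => c (X ω) :=
    (hcmeas.comp hXm).stronglyMeasurable
  have hYint : Integrable Y ν := by
    refine (integrable_const (1 : ℝ)).mono' hY.aestronglyMeasurable
      (Filter.Eventually.of_forall fun ω => ?_)
    rcases hY01 ω with h | h <;> simp [h]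
  have hgXint : Integrable (fun ω => g (X ω)) ν := by
    refine (integrable_const (1 : ℝ)).mono' (hg.comp hX).aestronglyMeasurable
      (Filter.Eventually.of_forall fun ω => ?_)
    have := (hg01 (X ω)).1; have := (hg01 (X ω)).2
    rw [Real.norm_eq_abs, abs_le]; constructor <;> linarith
  have hψint : Integrable (fun ω => Y ω - g (X ω)) ν := hYint.sub hgXint
  -- the integrand restricted to T equals the product
  have heqT : (fun ω =>
      if S ω then
        ((1 - pstar (X ω)) * Real.exp (η * Y ω)
          / (pstar (X ω) * (Real.exp η * g (X ω) + (1 - g (X ω)))))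
          * (ℓ (X ω) (Y ω) - b (X ω))
      else b (X ω)) =ᵐ[μ.restrict T]
      fun ω => c (X ω) * (Y ω - g (X ω)) := by
    filter_upwards [ae_restrict_mem hT] with ω hω
    have hωT : S ω = true := hω
    rw [if_pos hωT, key ω]
  have hres : Integrable (fun ω => c (X ω) * (Y ω - g (X ω))) (μ.restrict T) :=
    (hintegrand.restrict (s := T)).congr heqT
  have hprod_int : Integrable (fun ω => c (X ω) * (Y ω - g (X ω))) ν := by
    rw [show ν = (μ T)⁻¹ • μ.restrict T from rfl]
    exact hres.smul_measure (ENNReal.inv_ne_top.mpr hμT)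
  -- the conditional expectation vanishes
  have hψ0 : ν[fun ω => Y ω - g (X ω) | m] =ᵐ[ν] 0 := by
    have hsub := condExp_sub (m := m) (μ := ν) hYint hgXint
    have hgX : ν[fun ω => g (X ω) | m] = fun ω => g (X ω) :=
      condExp_of_stronglyMeasurable (f := fun ω => g (X ω)) hm
        ((hg.comp hXm).stronglyMeasurable) hgXint
    refine hsub.trans ?_
    have hgver' : ν[Y | m] =ᵐ[ν] fun ω => g (X ω) := hgver.symm
    filter_upwards [hgver'] with ω hω
    simp [Pi.sub_apply, hω, hgX]
  have hmul : ν[fun ω => c (X ω) * (Y ω - g (X ω)) | m] =ᵐ[ν] 0 := by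
    have := condExp_mul_of_stronglyMeasurable_left (μ := ν) hφm
      (by exact hprod_int) hψint
    refine this.trans ?_
    filter_upwards [hψ0] with ω hω
    have : (ν[fun ω => Y ω - g (X ω) | m]) ω = 0 := hω
    simp [this]
  haveI htrim : IsFiniteMeasure (ν.trim hm) := isFiniteMeasure_trim hm
  have hint0 : ∫ ω, c (X ω) * (Y ω - g (X ω)) ∂ν = 0 := by
    rw [← integral_condExp (μ := ν) hm (f := fun ω => c (X ω) * (Y ω - g (X ω)))]
    rw [integral_congr_ae hmul]; simp
  -- hence the set integral over T vanishes
  have hsetT : ∫ ω in T, (if S ω then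
        ((1 - pstar (X ω)) * Real.exp (η * Y ω)
          / (pstar (X ω) * (Real.exp η * g (X ω) + (1 - g (X ω)))))
          * (ℓ (X ω) (Y ω) - b (X ω))
      else b (X ω)) ∂μ = 0 := by
    rw [integral_congr_ae heqT]
    have hν_int : ∫ ω, c (X ω) * (Y ω - g (X ω)) ∂ν
        = ((μ T)⁻¹).toReal • ∫ ω in T, c (X ω) * (Y ω - g (X ω)) ∂μ := by
      rw [show ν = (μ T)⁻¹ • μ.restrict T from rfl, integral_smul_measure]
    rw [hint0] at hν_int
    have h2 : (μ T).toReal ≠ 0 := ENNReal.toReal_ne_zero.mpr ⟨hμT, hμT_top⟩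
    have hd := hν_int.symm
    rw [smul_eq_mul, ENNReal.toReal_inv] at hd
    rcases mul_eq_zero.mp hd with h | h
    · exact absurd h (inv_ne_zero h2)
    · exact h
  -- split the integral and conclude
  clear htrim hint0 hmul hψ0 hφm hXm hm hmdef hgver
  clear m
  rw [← integral_add_compl hT hintegrand, hsetT, hTc, zero_add]
  have hF : MeasurableSet F := hS (measurableSet_singleton false)
  have hsetF : ∫ ω in F, (if S ω then
        ((1 - pstar (X ω)) * Real.exp (η * Y ω)
          / (pstar (X ω) * (Real.exp η * g (X ω) + (1 - g (X ω)))))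
          * (ℓ (X ω) (Y ω) - b (X ω))
      else b (X ω)) ∂μ = ∫ ω in F, b (X ω) ∂μ := by
    refine integral_congr_ae ?_
    filter_upwards [ae_restrict_mem hF] with ω hω
    have hωF : S ω = false := hω
    rw [if_neg (by simp [hωF])]
  rw [hsetF]
  rw [show (μ[|F] : Measure Ω) = (μ F)⁻¹ • μ.restrict F from rfl, integral_smul_measure,
    smul_eq_mul, ENNReal.toReal_inv]
end

section
/- For every measurable a* : 𝒳 → ℝ making the displayed integrand μ-integrable, the alternative-parameterization augmentation term has mean zero when b is the true tilted conditional loss: E_μ[ 1_{S=1} · e^{a*(X) + η q(Y)} · (W − b(X)) ] = 0. -/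
open MeasureTheory ProbabilityTheory Real

/-- Pull-out property at the level of integrals: for `g` measurable w.r.t. a sub-σ-algebra `m`
and `f` integrable with `g * f` integrable, `∫ g f = ∫ g E[f|m]`. -/
lemma integral_mul_eq_integral_mul_condexp {Ω : Type*} {m m0 : MeasurableSpace Ω} (hm : m ≤ m0)
    (ν : Measure Ω) [IsProbabilityMeasure ν] {g f : Ω → ℝ}
    (hg : StronglyMeasurable[m] g) (hgf : Integrable (fun ω => g ω * f ω) ν)
    (hf : Integrable f ν) :
    ∫ ω, g ω * f ω ∂ν = ∫ ω, g ω * (ν[f|m]) ω ∂ν := by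
  have h : ν[g * f|m] =ᵐ[ν] g * ν[f|m] :=
    condExp_mul_of_stronglyMeasurable_left hg hgf hf
  calc ∫ ω, g ω * f ω ∂ν = ∫ ω, (ν[g * f|m]) ω ∂ν := (integral_condExp hm).symm
    _ = ∫ ω, g ω * (ν[f|m]) ω ∂ν := integral_congr_ae h

/-- Case 1 of the double-robustness Theorem 3 (selection-model parameterization): when
`b = r/c` is the true tilted conditional loss, the alternative-parameterization
augmentation term has μ-mean zero for every measurable offset `a*`:
`E_μ[1_{S=1} e^{a*(X) + η q(Y)} (W − b(X))] = 0`. -/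
theorem selection_model_augmentation_mean_zero
    {Ω : Type*} [MeasurableSpace Ω] {𝒳 : Type*} [MeasurableSpace 𝒳]
    (μ : Measure Ω) [IsProbabilityMeasure μ]
    (X : Ω → 𝒳) (Y : Ω → ℝ) (S : Ω → Bool)
    (hX : Measurable X) (hY : Measurable Y) (hS : Measurable S)
    (hS1 : 0 < μ {ω | S ω = true}) (hS0 : 0 < μ {ω | S ω = false})
    (η : ℝ) (q : ℝ → ℝ) (hq : Measurable q)
    (ℓ : 𝒳 → ℝ → ℝ) (hℓ : Measurable (Function.uncurry ℓ))
    (c r : 𝒳 → ℝ) (hc : Measurable c) (hr : Measurable r)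
    (hexp_int : Integrable (fun ω => Real.exp (η * q (Y ω))) (μ[|{ω | S ω = true}]))
    (hWexp_int : Integrable (fun ω => ℓ (X ω) (Y ω) * Real.exp (η * q (Y ω)))
      (μ[|{ω | S ω = true}]))
    (hcver : (fun ω => c (X ω)) =ᵐ[μ[|{ω | S ω = true}]]
      (μ[|{ω | S ω = true}])[fun ω => Real.exp (η * q (Y ω)) |
        MeasurableSpace.comap X inferInstance])
    (hcpos : ∀ᵐ ω ∂(μ[|{ω | S ω = true}]), 0 < c (X ω))
    (hrver : (fun ω => r (X ω)) =ᵐ[μ[|{ω | S ω = true}]]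
      (μ[|{ω | S ω = true}])[fun ω => ℓ (X ω) (Y ω) * Real.exp (η * q (Y ω)) |
        MeasurableSpace.comap X inferInstance])
    -- an arbitrary measurable offset a*
    (astar : 𝒳 → ℝ) (hastar : Measurable astar)
    (hintegrand : Integrable (fun ω =>
      if S ω then Real.exp (astar (X ω) + η * q (Y ω))
        * (ℓ (X ω) (Y ω) - r (X ω) / c (X ω))
      else 0) μ)
    (hintegrand₁ : Integrable (fun ω =>
      Real.exp (astar (X ω) + η * q (Y ω)) * (ℓ (X ω) (Y ω) - r (X ω) / c (X ω)))
      (μ[|{ω | S ω = true}])) :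
    ∫ ω, (if S ω then Real.exp (astar (X ω) + η * q (Y ω))
        * (ℓ (X ω) (Y ω) - r (X ω) / c (X ω))
      else 0) ∂μ = 0 := by
  classical
  rename_i mΩ m𝒳 hprob
  set s : Set Ω := {ω | S ω = true} with hs_def
  have hsm : MeasurableSet s := hS (measurableSet_singleton true)
  have hsne : μ s ≠ 0 := hS1.ne'
  set ν : Measure Ω := μ[|s] with hν_def
  haveI : IsProbabilityMeasure ν := ProbabilityTheory.cond_isProbabilityMeasure hsne
  have hind : ∫ ω, (if S ω then Real.exp (astar (X ω) + η * q (Y ω))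
        * (ℓ (X ω) (Y ω) - r (X ω) / c (X ω))
      else 0) ∂μ = ∫ ω in s, Real.exp (astar (X ω) + η * q (Y ω))
        * (ℓ (X ω) (Y ω) - r (X ω) / c (X ω)) ∂μ := by
    rw [← integral_indicator hsm]
    refine integral_congr_ae (Filter.Eventually.of_forall (fun ω => ?_))
    by_cases h : S ω = true
    · simp [Set.indicator_apply, hs_def, h]
    · simp [Set.indicator_apply, hs_def, h]
  have hsmul : ∫ ω, Real.exp (astar (X ω) + η * q (Y ω))
        * (ℓ (X ω) (Y ω) - r (X ω) / c (X ω)) ∂ν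
      = ((μ s)⁻¹).toReal * ∫ ω in s, Real.exp (astar (X ω) + η * q (Y ω))
        * (ℓ (X ω) (Y ω) - r (X ω) / c (X ω)) ∂μ := by
    rw [hν_def, ProbabilityTheory.cond, integral_smul_measure, smul_eq_mul]
  have hinv_ne : ((μ s)⁻¹).toReal ≠ 0 := by
    rw [ENNReal.toReal_inv]
    exact inv_ne_zero (ENNReal.toReal_ne_zero.mpr ⟨hsne, measure_ne_top μ s⟩)
  set m : MeasurableSpace Ω := MeasurableSpace.comap X inferInstance with hm_def
  have hm : m ≤ mΩ := hX.comap_le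
  have hXm : Measurable[m] X := Measurable.of_comap_le le_rfl
  -- notation
  set F : Ω → ℝ := fun ω => Real.exp (astar (X ω) + η * q (Y ω))
      * (ℓ (X ω) (Y ω) - r (X ω) / c (X ω)) with hF_def
  set g : Ω → ℝ := fun ω => Real.exp (astar (X ω)) with hg_def
  set e : Ω → ℝ := fun ω => Real.exp (η * q (Y ω)) with he_def
  set W : Ω → ℝ := fun ω => ℓ (X ω) (Y ω) with hW_def
  set b : Ω → ℝ := fun ω => r (X ω) / c (X ω) with hb_def
  have hFeq : ∀ ω, F ω = g ω * (e ω * (W ω - b ω)) := by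
    intro ω; simp only [hF_def, hg_def, he_def, hW_def, hb_def, Real.exp_add]; ring
  have hW_meas : Measurable[mΩ] W := hℓ.comp (hX.prodMk hY)
  have he_meas : Measurable[mΩ] e := (measurable_const.mul (hq.comp hY)).exp
  -- truncations
  set φ : ℕ → Ω → ℝ := fun n ω => min (g ω) (n : ℝ) with hφ_def
  have hφ_m : ∀ n, StronglyMeasurable[m] (φ n) := fun n =>
    (((Real.measurable_exp.comp (hastar.comp hXm)).min (@measurable_const ℝ Ω _ m _)).stronglyMeasurable)
  have hφ_meas : ∀ n, Measurable[mΩ] (φ n) := fun n => (hφ_m n).measurable.mono hm le_rfl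
  have hφ_nonneg : ∀ n ω, 0 ≤ φ n ω := fun n ω =>
    le_min (Real.exp_pos _).le (Nat.cast_nonneg n)
  have hφ_le_g : ∀ n ω, φ n ω ≤ g ω := fun n ω => min_le_left _ _
  have hφ_bdd : ∀ n, ∃ C : ℝ, ∀ ω, ‖φ n ω‖ ≤ C := by
    intro n
    exact ⟨n, fun ω => by
      rw [Real.norm_eq_abs, abs_of_nonneg (hφ_nonneg n ω)]; exact min_le_right _ _⟩
  -- the truncated integrands
  set Hn : ℕ → Ω → ℝ := fun n ω => φ n ω * (e ω * (W ω - b ω)) with hHn_def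
  have hHn_le : ∀ n ω, ‖Hn n ω‖ ≤ ‖F ω‖ := by
    intro n ω
    rw [hFeq ω]
    simp only [hHn_def, norm_mul]
    gcongr
    rw [Real.norm_eq_abs, abs_of_nonneg (hφ_nonneg n ω), Real.norm_eq_abs,
      abs_of_nonneg (Real.exp_pos _).le]
    exact hφ_le_g n ω
  have hHn_meas : ∀ n, AEStronglyMeasurable[mΩ] (Hn n) ν := fun n =>
    ((hφ_meas n).mul (he_meas.mul (hW_meas.sub ((hr.comp hX).div (hc.comp hX))))).aestronglyMeasurable
  have hHn_int : ∀ n, Integrable (Hn n) ν := fun n =>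
    (hintegrand₁.mono (hHn_meas n) (Filter.Eventually.of_forall (hHn_le n)))
  -- each truncated integral is zero
  have hzero : ∀ n, ∫ ω, Hn n ω ∂ν = 0 := by
    intro n
    -- first term
    have hK1 : Integrable (fun ω => W ω * e ω) ν := hWexp_int
    have hφK1 : Integrable (fun ω => φ n ω * (W ω * e ω)) ν :=
      hK1.bdd_mul ((hφ_meas n).aestronglyMeasurable) (Filter.Eventually.of_forall (hφ_bdd n).choose_spec)
    have h1 : ∫ ω, φ n ω * (W ω * e ω) ∂ν = ∫ ω, φ n ω * r (X ω) ∂ν := by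
      rw [integral_mul_eq_integral_mul_condexp hm ν (hφ_m n) hφK1 hK1]
      refine integral_congr_ae ?_
      filter_upwards [hrver] with ω hω
      rw [← hω]
    -- second term
    have hφK2 : Integrable (fun ω => (φ n ω * b ω) * e ω) ν := by
      have : (fun ω => (φ n ω * b ω) * e ω)
          = fun ω => φ n ω * (W ω * e ω) - Hn n ω := by
        funext ω; simp only [hHn_def]; ring
      rw [this]
      exact hφK1.sub (hHn_int n)
    have hφb_m : StronglyMeasurable[m] (fun ω => φ n ω * b ω) := by
      refine StronglyMeasurable.mul (hφ_m n) ?_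
      exact (((hr.comp hXm).div (hc.comp hXm)).stronglyMeasurable)
    have h2 : ∫ ω, (φ n ω * b ω) * e ω ∂ν = ∫ ω, φ n ω * r (X ω) ∂ν := by
      rw [integral_mul_eq_integral_mul_condexp hm ν hφb_m hφK2 hexp_int]
      refine integral_congr_ae ?_
      filter_upwards [hcver, hcpos] with ω hω hpos
      rw [← hω, hb_def]
      field_simp
    -- combine
    have hsplit : ∀ ω, Hn n ω = φ n ω * (W ω * e ω) - (φ n ω * b ω) * e ω := by
      intro ω; simp only [hHn_def]; ring
    calc ∫ ω, Hn n ω ∂ν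
        = ∫ ω, (φ n ω * (W ω * e ω) - (φ n ω * b ω) * e ω) ∂ν := by
          exact integral_congr_ae (Filter.Eventually.of_forall hsplit)
      _ = ∫ ω, φ n ω * (W ω * e ω) ∂ν - ∫ ω, (φ n ω * b ω) * e ω ∂ν :=
          integral_sub hφK1 hφK2
      _ = 0 := by rw [h1, h2, sub_self]
  -- dominated convergence
  have htendsto : Filter.Tendsto (fun n => ∫ ω, Hn n ω ∂ν) Filter.atTop
      (nhds (∫ ω, F ω ∂ν)) := by
    refine tendsto_integral_of_dominated_convergence (fun ω => ‖F ω‖)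
      hHn_meas hintegrand₁.norm
      (fun n => Filter.Eventually.of_forall (hHn_le n)) ?_
    refine Filter.Eventually.of_forall (fun ω => ?_)
    rw [hFeq ω]
    have : (fun n : ℕ => Hn n ω) =ᶠ[Filter.atTop] (fun _ => g ω * (e ω * (W ω - b ω))) := by
      filter_upwards [Filter.eventually_ge_atTop (Nat.ceil (g ω))] with n hn
      have : g ω ≤ (n : ℝ) := le_trans (Nat.le_ceil _) (Nat.cast_le.mpr hn)
      simp only [hHn_def, hφ_def, min_eq_left this]
    exact Filter.Tendsto.congr' this.symm tendsto_const_nhds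
  have hconst : Filter.Tendsto (fun n : ℕ => ∫ ω, Hn n ω ∂ν) Filter.atTop (nhds 0) := by
    simp only [hzero]
    exact tendsto_const_nhds
  have hνzero : ∫ ω, F ω ∂ν = 0 := tendsto_nhds_unique htendsto hconst
  rw [hind]
  have := hνzero
  rw [hsmul] at this
  exact (mul_eq_zero.mp this).resolve_left hinv_ne
end

section
/- Assume positivity: 0 < p(X) < 1 μ-a.s. where p∘X is a version of E_μ[1_{S=1} | σ(X)], and define the true selection-model offset a(x) = ln((1 − p(x))/p(x)) − ln c(x). Then for every measurable b* : 𝒳 → ℝ making the displayed integrands μ-integrable: E_μ[ 1_{S=1} · e^{a(X) + η q(Y)} · b*(X) ] = E_μ[ 1_{S=0} · b*(X) ]. -/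
open MeasureTheory ProbabilityTheory Real

/-- Case 2 of the double-robustness Theorem 3 (selection-model parameterization), second
part: the true selection-model weights `e^{a(X) + η q(Y)}`, with offset
`a(x) = ln((1 − p(x))/p(x)) − ln c(x)`, transport any covariate function `b*` from the
source population to the target population:
`E_μ[1_{S=1} e^{a(X) + η q(Y)} b*(X)] = E_μ[1_{S=0} b*(X)]`. -/
theorem selection_model_weights_transport_covariate_functions
    {Ω : Type*} [MeasurableSpace Ω] {𝒳 : Type*} [MeasurableSpace 𝒳]
    (μ : Measure Ω) [IsProbabilityMeasure μ]
    (X : Ω → 𝒳) (Y : Ω → ℝ) (S : Ω → Bool)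
    (hX : Measurable X) (hY : Measurable Y) (hS : Measurable S)
    (hS1 : 0 < μ {ω | S ω = true}) (hS0 : 0 < μ {ω | S ω = false})
    (η : ℝ) (q : ℝ → ℝ) (hq : Measurable q)
    (c : 𝒳 → ℝ) (hc : Measurable c)
    (hexp_int : Integrable (fun ω => Real.exp (η * q (Y ω))) (μ[|{ω | S ω = true}]))
    (hcver : (fun ω => c (X ω)) =ᵐ[μ[|{ω | S ω = true}]]
      (μ[|{ω | S ω = true}])[fun ω => Real.exp (η * q (Y ω)) |
        MeasurableSpace.comap X inferInstance])
    (hcpos : ∀ᵐ ω ∂(μ[|{ω | S ω = true}]), 0 < c (X ω))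
    -- the true propensity, with positivity 0 < p(X) < 1 μ-a.s.
    (p : 𝒳 → ℝ) (hp : Measurable p)
    (hpver : (fun ω => p (X ω)) =ᵐ[μ]
      μ[fun ω => if S ω then (1 : ℝ) else 0 | MeasurableSpace.comap X inferInstance])
    (hppos : ∀ᵐ ω ∂μ, 0 < p (X ω) ∧ p (X ω) < 1)
    -- the true selection-model offset
    (a : 𝒳 → ℝ)
    (ha : ∀ x, a x = Real.log ((1 - p x) / p x) - Real.log (c x))
    -- an arbitrary measurable covariate function b*
    (bstar : 𝒳 → ℝ) (hbstar : Measurable bstar)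
    (hwt_int : Integrable (fun ω =>
      if S ω then Real.exp (a (X ω) + η * q (Y ω)) * bstar (X ω) else 0) μ)
    (hbstar_int : Integrable (fun ω => if S ω then 0 else bstar (X ω)) μ) :
    ∫ ω, (if S ω then Real.exp (a (X ω) + η * q (Y ω)) * bstar (X ω) else 0) ∂μ
      = ∫ ω, (if S ω then 0 else bstar (X ω)) ∂μ := by
  classical
  set A : Set Ω := {ω | S ω = true} with hA_def
  have hA : MeasurableSet A := hS (measurableSet_singleton true)
  have hμA_ne : μ A ≠ 0 := hS1.ne'
  have hμA_top : μ A ≠ ⊤ := measure_ne_top μ A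
  set μ₁ : Measure Ω := μ[|A] with hμ₁_def
  haveI : IsProbabilityMeasure μ₁ := cond_isProbabilityMeasure hμA_ne
  have hm : MeasurableSpace.comap X inferInstance ≤ (inferInstance : MeasurableSpace Ω) :=
    hX.comap_le
  haveI h1 : SigmaFinite (μ.trim hm) := by infer_instance
  haveI h2 : SigmaFinite (μ₁.trim hm) := by infer_instance
  have hXm : Measurable[MeasurableSpace.comap X inferInstance] X := Measurable.of_comap_le le_rfl
  -- measurability of a
  have ha_meas : Measurable a := by
    have : a = fun x => Real.log ((1 - p x) / p x) - Real.log (c x) := funext ha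
    rw [this]
    exact (((measurable_const.sub hp).div hp).log).sub (hc.log)
  -- a.e. positivity transferred to μ₁
  have hac : μ₁ ≪ μ := cond_absolutelyContinuous
  have hppos₁ : ∀ᵐ ω ∂μ₁, 0 < p (X ω) ∧ p (X ω) < 1 :=
    (Measure.ae_le_iff_absolutelyContinuous.2 hac) hppos
  -- the target covariate function
  set h : 𝒳 → ℝ := fun x => (1 - p x) / p x * bstar x with hh_def
  have hh_meas : Measurable h := ((measurable_const.sub hp).div hp).mul hbstar
  -- `g = exp(a(X)) * bstar(X)` is m-measurable
  set g : Ω → ℝ := fun ω => Real.exp (a (X ω)) * bstar (X ω) with hg_def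
  have hg_m : StronglyMeasurable[MeasurableSpace.comap X inferInstance] g :=
    (((ha_meas.comp hXm).exp).mul (hbstar.comp hXm)).stronglyMeasurable
  set f : Ω → ℝ := fun ω => Real.exp (η * q (Y ω)) with hf_def
  -- indicator rewriting of the weighted integrand
  have hind : (fun ω => if S ω then Real.exp (a (X ω) + η * q (Y ω)) * bstar (X ω) else 0)
      = A.indicator (fun ω => Real.exp (a (X ω) + η * q (Y ω)) * bstar (X ω)) := by
    funext ω
    by_cases hs : S ω = true <;> simp [Set.indicator_apply, hA_def, hs]
  -- relation between μ.restrict A and μ₁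
  have hcond_eq : μ₁ = (μ A)⁻¹ • μ.restrict A := rfl
  have hrestrict : μ.restrict A = (μ A) • μ₁ := by
    rw [hcond_eq, smul_smul, ENNReal.mul_inv_cancel hμA_ne hμA_top, one_smul]
  -- Integrability of g * f over μ₁
  have hgf_int : Integrable (g * f) μ₁ := by
    have h1 : Integrable (fun ω => Real.exp (a (X ω) + η * q (Y ω)) * bstar (X ω))
        (μ.restrict A) := by
      exact (integrable_indicator_iff hA).mp (by rw [← hind]; exact hwt_int)
    have h2 : Integrable (fun ω => Real.exp (a (X ω) + η * q (Y ω)) * bstar (X ω)) μ₁ := by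
      rw [hcond_eq]
      exact (h1.smul_measure (by simp [hμA_ne]))
    exact h2.congr (Filter.Eventually.of_forall fun ω => by
      simp only [Pi.mul_apply, hg_def, hf_def, Real.exp_add]; ring)
  -- pull-out property on μ₁
  have hpull₁ : μ₁[g * f|MeasurableSpace.comap X inferInstance] =ᵐ[μ₁] g * μ₁[f|MeasurableSpace.comap X inferInstance] :=
    condExp_mul_of_stronglyMeasurable_left hg_m hgf_int hexp_int
  -- g * c(X) is integrable and a.e. equal to h(X) on μ₁
  have hgc_ae : g * (fun ω => c (X ω)) =ᵐ[μ₁] fun ω => h (X ω) := by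
    filter_upwards [hcpos, hppos₁] with ω hcω hpω
    have hpos : 0 < (1 - p (X ω)) / p (X ω) := div_pos (by linarith [hpω.2]) hpω.1
    simp only [Pi.mul_apply, hg_def, hh_def, ha]
    rw [Real.exp_sub, Real.exp_log hpos, Real.exp_log hcω]
    field_simp
  have hgc_eq : g * (fun ω => c (X ω)) =ᵐ[μ₁] g * μ₁[f|MeasurableSpace.comap X inferInstance] := by
    filter_upwards [hcver] with ω hω
    simp only [Pi.mul_apply, hω]
  have hgMulCondexp_int : Integrable (g * μ₁[f|MeasurableSpace.comap X inferInstance]) μ₁ :=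
    (integrable_condExp (f := g * f)).congr hpull₁
  have hhX_int₁ : Integrable (fun ω => h (X ω)) μ₁ :=
    ((hgMulCondexp_int.congr hgc_eq.symm).congr hgc_ae)
  -- Step B+C : ∫ weighted dμ₁ = ∫ h(X) dμ₁
  have hstep1 : ∫ ω, (g * f) ω ∂μ₁ = ∫ ω, h (X ω) ∂μ₁ := by
    rw [← integral_condExp hm (f := g * f) (μ := μ₁)]
    rw [integral_congr_ae hpull₁, ← integral_congr_ae hgc_eq]
    exact integral_congr_ae hgc_ae
  -- translate to integrals over μ.restrict A
  have hsmul_int : ∀ (F : Ω → ℝ), ∫ ω, F ω ∂(μ.restrict A) = (μ A).toReal * ∫ ω, F ω ∂μ₁ := by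
    intro F
    rw [hrestrict, integral_smul_measure]
    simp
  -- integrability of the indicator of h(X)
  have hhX_int_ind : Integrable (A.indicator fun ω => h (X ω)) μ := by
    rw [integrable_indicator_iff hA]
    have : Integrable (fun ω => h (X ω)) (μ.restrict A) := by
      rw [hrestrict]; exact hhX_int₁.smul_measure hμA_top
    exact this
  -- LHS equals ∫ indicator h(X) dμ
  have hLHS : ∫ ω, (if S ω then Real.exp (a (X ω) + η * q (Y ω)) * bstar (X ω) else 0) ∂μ
      = ∫ ω, A.indicator (fun ω => h (X ω)) ω ∂μ := by
    rw [hind, integral_indicator hA, integral_indicator hA, hsmul_int, hsmul_int, ← hstep1]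
    congr 1
    apply integral_congr_ae
    exact Filter.Eventually.of_forall fun ω => by
      simp only [Pi.mul_apply, hg_def, hf_def, Real.exp_add]; ring
  -- Now work with the propensity on μ
  set f2 : Ω → ℝ := fun ω => if S ω then (1 : ℝ) else 0 with hf2_def
  have hf2_int : Integrable f2 μ := by
    have : f2 = A.indicator (fun _ => (1:ℝ)) := by
      funext ω; by_cases hs : S ω = true <;> simp [hf2_def, Set.indicator_apply, hA_def, hs]
    rw [this]
    exact (integrable_const (1:ℝ)).indicator hA
  have hg2_m : StronglyMeasurable[MeasurableSpace.comap X inferInstance] (fun ω => h (X ω)) :=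
    (hh_meas.comp hXm).stronglyMeasurable
  have hg2f2 : (fun ω => h (X ω)) * f2 = A.indicator fun ω => h (X ω) := by
    funext ω; by_cases hs : S ω = true <;>
      simp [hf2_def, Set.indicator_apply, hA_def, hs]
  have hg2f2_int : Integrable ((fun ω => h (X ω)) * f2) μ := by
    rw [hg2f2]; exact hhX_int_ind
  have hpull₂ : μ[(fun ω => h (X ω)) * f2|MeasurableSpace.comap X inferInstance] =ᵐ[μ] (fun ω => h (X ω)) * μ[f2|MeasurableSpace.comap X inferInstance] :=
    condExp_mul_of_stronglyMeasurable_left hg2_m hg2f2_int hf2_int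
  have hmid : ∫ ω, A.indicator (fun ω => h (X ω)) ω ∂μ
      = ∫ ω, h (X ω) * p (X ω) ∂μ := by
    rw [← hg2f2, ← integral_condExp hm (f := (fun ω => h (X ω)) * f2) (μ := μ),
      integral_congr_ae hpull₂]
    apply integral_congr_ae
    filter_upwards [hpver] with ω hω
    simp only [Pi.mul_apply, ← hω]
  -- RHS side
  set f3 : Ω → ℝ := fun ω => if S ω then (0:ℝ) else 1 with hf3_def
  have hf3_eq : f3 = fun ω => 1 - f2 ω := by
    funext ω; by_cases hs : S ω = true <;> simp [hf3_def, hf2_def, hs]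
  have hf3_int : Integrable f3 μ := by
    rw [hf3_eq]; exact (integrable_const 1).sub hf2_int
  have hg3_m : StronglyMeasurable[MeasurableSpace.comap X inferInstance] (fun ω => bstar (X ω)) :=
    (hbstar.comp hXm).stronglyMeasurable
  have hg3f3_int : Integrable ((fun ω => bstar (X ω)) * f3) μ := by
    refine hbstar_int.congr (Filter.Eventually.of_forall fun ω => ?_)
    by_cases hs : S ω = true <;> simp [hf3_def, hs]
  have hpull₃ : μ[(fun ω => bstar (X ω)) * f3|MeasurableSpace.comap X inferInstance] =ᵐ[μ] (fun ω => bstar (X ω)) * μ[f3|MeasurableSpace.comap X inferInstance] :=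
    condExp_mul_of_stronglyMeasurable_left hg3_m hg3f3_int hf3_int
  have hf3_cond : μ[f3|MeasurableSpace.comap X inferInstance] =ᵐ[μ] fun ω => 1 - p (X ω) := by
    rw [hf3_eq]
    have h1 : μ[(fun ω => 1 - f2 ω)|MeasurableSpace.comap X inferInstance] =ᵐ[μ] μ[(fun _ => (1:ℝ))|MeasurableSpace.comap X inferInstance] - μ[f2|MeasurableSpace.comap X inferInstance] :=
      condExp_sub (integrable_const 1) hf2_int _
    have h2 : μ[(fun _ => (1:ℝ))|MeasurableSpace.comap X inferInstance] = fun _ => (1:ℝ) := condExp_const (μ := μ) hm (1:ℝ)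
    filter_upwards [h1, hpver] with ω hω hpω
    rw [hω, h2]
    simp only [Pi.sub_apply, hpω]
  have hRHS : ∫ ω, (if S ω then 0 else bstar (X ω)) ∂μ
      = ∫ ω, bstar (X ω) * (1 - p (X ω)) ∂μ := by
    have heq : (fun ω => if S ω then (0:ℝ) else bstar (X ω))
        = (fun ω => bstar (X ω)) * f3 := by
      funext ω; by_cases hs : S ω = true <;> simp [hf3_def, hs]
    rw [heq, ← integral_condExp hm (f := (fun ω => bstar (X ω)) * f3) (μ := μ),
      integral_congr_ae hpull₃]
    apply integral_congr_ae
    filter_upwards [hf3_cond] with ω hω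
    simp only [Pi.mul_apply, hω]
  -- combine
  rw [hLHS, hmid, hRHS]
  apply integral_congr_ae
  filter_upwards [hppos] with ω hω
  have hp0 : p (X ω) ≠ 0 := ne_of_gt hω.1
  simp only [hh_def]
  field_simp
end

section
/- Assume positivity: 0 < p(X) < 1 μ-a.s. where p∘X is a version of E_μ[1_{S=1} | σ(X)], and define the true selection-model offset a(x) = ln((1 − p(x))/p(x)) − ln c(x). Then the generalized method of moments population equation holds: E_μ[ 1_{S=1} · e^{a(X) + η q(Y)} ] = μ(S = 0), equivalently E_μ[ 1_{S=1} e^{a(X) + η q(Y)} / μ(S=0) − 1 ] = 0. -/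
open MeasureTheory ProbabilityTheory Real

/-- The generalized method of moments population equation for the selection-model offset:
with the true offset `a(x) = ln((1 − p(x))/p(x)) − ln c(x)`,
`E_μ[1_{S=1} e^{a(X) + η q(Y)}] = μ(S = 0)`, equivalently
`E_μ[1_{S=1} e^{a(X) + η q(Y)} / μ(S=0) − 1] = 0`. -/
theorem selection_model_gmm_moment_condition
    {Ω : Type*} [MeasurableSpace Ω] {𝒳 : Type*} [MeasurableSpace 𝒳]
    (μ : Measure Ω) [IsProbabilityMeasure μ]
    (X : Ω → 𝒳) (Y : Ω → ℝ) (S : Ω → Bool)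
    (hX : Measurable X) (hY : Measurable Y) (hS : Measurable S)
    (hS1 : 0 < μ {ω | S ω = true}) (hS0 : 0 < μ {ω | S ω = false})
    (η : ℝ) (q : ℝ → ℝ) (hq : Measurable q)
    (c : 𝒳 → ℝ) (hc : Measurable c)
    (hexp_int : Integrable (fun ω => Real.exp (η * q (Y ω))) (μ[|{ω | S ω = true}]))
    (hcver : (fun ω => c (X ω)) =ᵐ[μ[|{ω | S ω = true}]]
      (μ[|{ω | S ω = true}])[fun ω => Real.exp (η * q (Y ω)) |
        MeasurableSpace.comap X inferInstance])
    (hcpos : ∀ᵐ ω ∂(μ[|{ω | S ω = true}]), 0 < c (X ω))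
    -- the true propensity, with positivity 0 < p(X) < 1 μ-a.s.
    (p : 𝒳 → ℝ) (hp : Measurable p)
    (hpver : (fun ω => p (X ω)) =ᵐ[μ]
      μ[fun ω => if S ω then (1 : ℝ) else 0 | MeasurableSpace.comap X inferInstance])
    (hppos : ∀ᵐ ω ∂μ, 0 < p (X ω) ∧ p (X ω) < 1)
    -- the true selection-model offset
    (a : 𝒳 → ℝ)
    (ha : ∀ x, a x = Real.log ((1 - p x) / p x) - Real.log (c x))
    (hwt_int : Integrable (fun ω =>
      if S ω then Real.exp (a (X ω) + η * q (Y ω)) else 0) μ) :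
    (∫ ω, (if S ω then Real.exp (a (X ω) + η * q (Y ω)) else 0) ∂μ
        = (μ {ω | S ω = false}).toReal) ∧
      ∫ ω, ((if S ω then Real.exp (a (X ω) + η * q (Y ω)) else 0)
          / (μ {ω | S ω = false}).toReal - 1) ∂μ = 0 := by
  set T : Set Ω := {ω | S ω = true} with hTdef
  have hT : MeasurableSet T := hS (measurableSet_singleton true)
  set μ₁ : Measure Ω := μ[|T] with hμ₁def
  haveI : IsProbabilityMeasure μ₁ := cond_isProbabilityMeasure hS1.ne'
  have hμ₁ac : μ₁ ≪ μ := cond_absolutelyContinuous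
  have hμ₁smul : μ₁ = (μ T)⁻¹ • μ.restrict T := rfl
  have hXm : Measurable[MeasurableSpace.comap X inferInstance] X :=
    measurable_iff_comap_le.mpr le_rfl
  have hm : MeasurableSpace.comap X inferInstance ≤ (inferInstance : MeasurableSpace Ω) :=
    hX.comap_le
  set w : Ω → ℝ := fun ω => if S ω then Real.exp (a (X ω) + η * q (Y ω)) else 0 with hwdef
  have hμT_ne0 : μ T ≠ 0 := hS1.ne'
  have hμT_ne_top : μ T ≠ ⊤ := measure_ne_top μ T
  -- a is measurable
  have haM : Measurable a := by
    have : a = fun x => Real.log ((1 - p x) / p x) - Real.log (c x) := funext ha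
    rw [this]
    exact (Real.measurable_log.comp ((measurable_const.sub hp).div hp)).sub
      (Real.measurable_log.comp hc)
  set f : Ω → ℝ := fun ω => Real.exp (a (X ω)) with hfdef
  set g : Ω → ℝ := fun ω => Real.exp (η * q (Y ω)) with hgdef
  have hf : StronglyMeasurable[MeasurableSpace.comap X inferInstance] f :=
    ((Real.measurable_exp.comp haM).comp hXm).stronglyMeasurable
  -- w is the indicator of T of f * g
  have hw_ind : w = T.indicator (f * g) := by
    funext ω
    by_cases h : S ω = true <;>
      simp [hwdef, hfdef, hgdef, Set.indicator_apply, hTdef, h, Real.exp_add]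
  -- integrability of f * g under μ₁
  have hfg_restrict : Integrable (f * g) (μ.restrict T) := by
    exact (integrable_indicator_iff hT).1 (hw_ind ▸ hwt_int)
  have hfg : Integrable (f * g) μ₁ := by
    rw [hμ₁smul]
    exact hfg_restrict.smul_measure (ENNReal.inv_ne_top.mpr hμT_ne0)
  -- pull-out property under μ₁
  have hmul : μ₁[f * g|MeasurableSpace.comap X inferInstance] =ᵐ[μ₁]
      f * μ₁[g|MeasurableSpace.comap X inferInstance] :=
    condExp_mul_of_stronglyMeasurable_left hf hfg hexp_int
  have hfc : (f * μ₁[g|MeasurableSpace.comap X inferInstance]) =ᵐ[μ₁]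
      fun ω => f ω * c (X ω) := by
    filter_upwards [hcver] with ω hω
    simp [hω]
  -- pointwise identity exp(a(X)) * c(X) = (1-p(X))/p(X) a.e. μ₁
  set r : Ω → ℝ := fun ω => (1 - p (X ω)) / p (X ω) with hrdef
  have hppos₁ : ∀ᵐ ω ∂μ₁, 0 < p (X ω) ∧ p (X ω) < 1 := hμ₁ac.ae_le hppos
  have hfcr : (fun ω => f ω * c (X ω)) =ᵐ[μ₁] r := by
    filter_upwards [hppos₁, hcpos] with ω hpp hcp
    have hrpos : 0 < (1 - p (X ω)) / p (X ω) :=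
      div_pos (by linarith [hpp.2]) hpp.1
    simp only [hfdef, hrdef, ha (X ω), Real.exp_sub, Real.exp_log hrpos,
      Real.exp_log hcp]
    field_simp
  -- step A conclusion: ∫ f*g dμ₁ = ∫ r dμ₁
  have hstepA : ∫ ω, (f * g) ω ∂μ₁ = ∫ ω, r ω ∂μ₁ := by
    rw [← integral_condExp hm (f := f * g) (μ := μ₁),
      integral_congr_ae (hmul.trans (hfc.trans hfcr))]
  have hr_int₁ : Integrable r μ₁ :=
    (integrable_condExp.congr (hmul.trans (hfc.trans hfcr)))
  -- transfer to μ
  have hsmul_back : (μ T) • μ₁ = μ.restrict T := by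
    rw [hμ₁smul, smul_smul, ENNReal.mul_inv_cancel hμT_ne0 hμT_ne_top, one_smul]
  have hr_restrict : Integrable r (μ.restrict T) := by
    rw [← hsmul_back]
    exact hr_int₁.smul_measure hμT_ne_top
  have hr_ind_int : Integrable (T.indicator r) μ :=
    (integrable_indicator_iff hT).2 hr_restrict
  have hint_restrict : ∀ (h : Ω → ℝ),
      ∫ ω, h ω ∂μ.restrict T = (μ T).toReal * ∫ ω, h ω ∂μ₁ := by
    intro h
    rw [hμ₁smul, integral_smul_measure, ENNReal.toReal_inv, smul_eq_mul, ← mul_assoc,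
      mul_inv_cancel₀ (ENNReal.toReal_ne_zero.mpr ⟨hμT_ne0, hμT_ne_top⟩), one_mul]
  -- ∫ w dμ = μ(T).toReal * ∫ f*g dμ₁
  have hW : ∫ ω, w ω ∂μ = (μ T).toReal * ∫ ω, (f * g) ω ∂μ₁ := by
    rw [hw_ind, integral_indicator hT, hint_restrict]
  -- step B : conditional expectation under μ
  set g₂ : Ω → ℝ := fun ω => if S ω then (1 : ℝ) else 0 with hg₂def
  have hg₂_ind : g₂ = T.indicator (fun _ => (1 : ℝ)) := by
    funext ω
    by_cases h : S ω = true <;> simp [hg₂def, Set.indicator_apply, hTdef, h]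
  have hg₂_int : Integrable g₂ μ := by
    rw [hg₂_ind]
    exact (integrable_const (1 : ℝ)).indicator hT
  have hf₂ : StronglyMeasurable[MeasurableSpace.comap X inferInstance] r := by
    have h' : Measurable[MeasurableSpace.comap X inferInstance] (fun ω => p (X ω)) :=
      hp.comp hXm
    exact ((measurable_const.sub h').div h').stronglyMeasurable
  have hrg₂ : r * g₂ = T.indicator r := by
    funext ω
    by_cases h : S ω = true <;> simp [hg₂def, Set.indicator_apply, hTdef, h]
  have hrg₂_int : Integrable (r * g₂) μ := by rw [hrg₂]; exact hr_ind_int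
  have hmul2 : μ[r * g₂|MeasurableSpace.comap X inferInstance] =ᵐ[μ]
      r * μ[g₂|MeasurableSpace.comap X inferInstance] :=
    condExp_mul_of_stronglyMeasurable_left hf₂ hrg₂_int hg₂_int
  have hrp : (r * μ[g₂|MeasurableSpace.comap X inferInstance]) =ᵐ[μ]
      fun ω => 1 - p (X ω) := by
    filter_upwards [hpver, hppos] with ω hω hpp
    simp only [Pi.mul_apply, ← hω, hrdef]
    field_simp
    rw [mul_div_cancel_left₀ _ hpp.1.ne']
  have hp_int : Integrable (fun ω => p (X ω)) μ :=
    integrable_condExp.congr hpver.symm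
  have hp_integral : ∫ ω, p (X ω) ∂μ = (μ T).toReal := by
    rw [integral_congr_ae hpver, integral_condExp hm, hg₂_ind,
      integral_indicator hT, setIntegral_const, smul_eq_mul, mul_one, Measure.real]
  have hstepB : ∫ ω, (r * g₂) ω ∂μ = 1 - (μ T).toReal := by
    rw [← integral_condExp hm (f := r * g₂) (μ := μ),
      integral_congr_ae (hmul2.trans hrp),
      integral_sub (integrable_const 1) hp_int, integral_const, probReal_univ,
      smul_eq_mul, one_mul, hp_integral]
  -- assemble
  have hTr : ∫ ω, r ω ∂μ.restrict T = 1 - (μ T).toReal := by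
    rw [← integral_indicator hT, ← hrg₂]; exact hstepB
  have hmain : ∫ ω, w ω ∂μ = 1 - (μ T).toReal := by
    rw [hW, hstepA, ← hint_restrict, hTr]
  have hcompl : {ω | S ω = false} = Tᶜ := by
    ext ω; simp [hTdef]
  have hμF : (μ {ω | S ω = false}).toReal = 1 - (μ T).toReal := by
    rw [hcompl, prob_compl_eq_one_sub hT,
      ENNReal.toReal_sub_of_le prob_le_one ENNReal.one_ne_top, ENNReal.toReal_one]
  have h1 : ∫ ω, w ω ∂μ = (μ {ω | S ω = false}).toReal := by rw [hmain, hμF]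
  refine ⟨h1, ?_⟩
  have hk_ne : (μ {ω | S ω = false}).toReal ≠ 0 :=
    ENNReal.toReal_ne_zero.mpr ⟨hS0.ne', measure_ne_top _ _⟩
  rw [integral_sub (hwt_int.div_const _) (integrable_const 1), integral_div, h1,
    div_self hk_ne, integral_const, probReal_univ, smul_eq_mul,
    one_mul, sub_self]
end

section
/- Assume positivity: p(X) > 0 μ-a.s. where p∘X is a version of E_μ[1_{S=1} | σ(X)]. Then the population augmented functional for the non-nested design evaluated at the true nuisance functions equals the identified risk: (1/μ(S=0)) · E_μ[ 1_{S=0} · b(X) + 1_{S=1} · ((1 − p(X)) e^{η q(Y)} / (p(X) · c(X))) · (W − b(X)) ] = E_{μ₀}[ b(X) ]. In particular, if in addition the exponential tilt hypothesis holds (b∘X is a version of E_{μ₀}[W | σ(X)]), this common value equals the target-population risk φ(η) = E_{μ₀}[W]; equivalently, the non-parametric influence function Φ¹(η) evaluated at the true nuisances has μ-mean zero. -/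
open MeasureTheory ProbabilityTheory Real

/-- Integrability of the tilted conditional loss times the tilt. -/
lemma be_integrable_aux {Ω : Type*} [MeasurableSpace Ω] {𝒳 : Type*} [MeasurableSpace 𝒳]
    (ν : Measure Ω) [IsProbabilityMeasure ν]
    (X : Ω → 𝒳) (hX : Measurable X) (e : Ω → ℝ) (he : Measurable e)
    (he_pos : ∀ ω, 0 < e ω) (he_int : Integrable e ν)
    (c r : 𝒳 → ℝ) (hc : Measurable c) (hr : Measurable r)
    (hcver : (fun ω => c (X ω)) =ᵐ[ν] ν[e | MeasurableSpace.comap X inferInstance])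
    (hcpos : ∀ᵐ ω ∂ν, 0 < c (X ω))
    (hr_int : Integrable (fun ω => r (X ω)) ν) :
    Integrable (fun ω => r (X ω) / c (X ω) * e ω) ν := by
  have hm : MeasurableSpace.comap X inferInstance ≤ ‹MeasurableSpace Ω› := hX.comap_le
  have hXm : @Measurable Ω 𝒳 (MeasurableSpace.comap X inferInstance) _ X :=
    fun s hs => ⟨s, hs, rfl⟩
  have hb_meas : Measurable fun x => r x / c x := hr.div hc
  -- truncations
  have htrunc_int : ∀ n : ℕ, Integrable (fun ω => min |r (X ω) / c (X ω)| n * e ω) ν := by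
    intro n
    refine he_int.bdd_mul ((hb_meas.comp hX).abs.min measurable_const).aestronglyMeasurable
      (c := n) (Filter.Eventually.of_forall fun ω => ?_)
    rw [Real.norm_eq_abs, abs_of_nonneg (le_min (abs_nonneg _) n.cast_nonneg)]
    exact min_le_right _ _
  have hc_int : Integrable (fun ω => c (X ω)) ν := integrable_condExp.congr hcver.symm
  have htrunc_c_int : ∀ n : ℕ, Integrable (fun ω => min |r (X ω) / c (X ω)| n * c (X ω)) ν := by
    intro n
    refine hc_int.bdd_mul ((hb_meas.comp hX).abs.min measurable_const).aestronglyMeasurable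
      (c := n) (Filter.Eventually.of_forall fun ω => ?_)
    rw [Real.norm_eq_abs, abs_of_nonneg (le_min (abs_nonneg _) n.cast_nonneg)]
    exact min_le_right _ _
  have hcomp : ∀ {ψ : 𝒳 → ℝ}, Measurable ψ →
      StronglyMeasurable[MeasurableSpace.comap X inferInstance] fun ω => ψ (X ω) :=
    fun hψ => (hψ.comp hXm).stronglyMeasurable
  have hsm : ∀ n : ℕ, StronglyMeasurable[MeasurableSpace.comap X inferInstance]
      fun ω => min |r (X ω) / c (X ω)| (n : ℝ) :=
    fun n => hcomp (hb_meas.abs.min measurable_const)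
  have htrunc_eq : ∀ n : ℕ, ∫ ω, min |r (X ω) / c (X ω)| n * e ω ∂ν
      = ∫ ω, min |r (X ω) / c (X ω)| n * c (X ω) ∂ν := by
    intro n
    have hpull := condExp_mul_of_stronglyMeasurable_left (μ := ν) (hsm n) (htrunc_int n) he_int
    calc ∫ ω, min |r (X ω) / c (X ω)| n * e ω ∂ν
        = ∫ ω, (ν[(fun ω => min |r (X ω) / c (X ω)| (n : ℝ)) * e |
            MeasurableSpace.comap X inferInstance]) ω ∂ν := (integral_condExp hm).symm
      _ = ∫ ω, min |r (X ω) / c (X ω)| n * c (X ω) ∂ν := by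
          refine integral_congr_ae (hpull.trans ?_)
          filter_upwards [hcver] with ω hω
          simp only [Pi.mul_apply]
          rw [← hω]
  have hbound : ∀ n : ℕ, ∫ ω, min |r (X ω) / c (X ω)| n * e ω ∂ν ≤ ∫ ω, |r (X ω)| ∂ν := by
    intro n
    rw [htrunc_eq n]
    refine integral_mono_ae (htrunc_c_int n) hr_int.abs ?_
    filter_upwards [hcpos] with ω hcω
    calc min |r (X ω) / c (X ω)| n * c (X ω)
        ≤ |r (X ω) / c (X ω)| * c (X ω) :=
          mul_le_mul_of_nonneg_right (min_le_left _ _) hcω.le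
      _ = |r (X ω)| := by
          rw [abs_div, abs_of_pos hcω, div_mul_cancel₀ _ hcω.ne']
  refine ⟨((hb_meas.comp hX).mul he).aestronglyMeasurable, ?_⟩
  rw [hasFiniteIntegral_iff_norm]
  have hpt : ∀ ω, ENNReal.ofReal ‖r (X ω) / c (X ω) * e ω‖
      = ⨆ n : ℕ, ENNReal.ofReal (min |r (X ω) / c (X ω)| n * e ω) := by
    intro ω
    rw [Real.norm_eq_abs, abs_mul, abs_of_pos (he_pos ω)]
    apply le_antisymm
    · refine le_trans ?_ (le_iSup _ ⌈|r (X ω) / c (X ω)|⌉₊)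
      rw [min_eq_left (Nat.le_ceil _)]
    · exact iSup_le fun n => ENNReal.ofReal_le_ofReal
        (mul_le_mul_of_nonneg_right (min_le_left _ _) (he_pos ω).le)
  calc ∫⁻ ω, ENNReal.ofReal ‖r (X ω) / c (X ω) * e ω‖ ∂ν
      = ∫⁻ ω, ⨆ n : ℕ, ENNReal.ofReal (min |r (X ω) / c (X ω)| n * e ω) ∂ν := by
        simp_rw [hpt]
    _ = ⨆ n : ℕ, ∫⁻ ω, ENNReal.ofReal (min |r (X ω) / c (X ω)| n * e ω) ∂ν := by
        refine lintegral_iSup (fun n =>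
          ((((hb_meas.comp hX).abs.min measurable_const).mul he).ennreal_ofReal)) ?_
        intro i j hij ω
        exact ENNReal.ofReal_le_ofReal (mul_le_mul_of_nonneg_right
          (min_le_min le_rfl (Nat.cast_le.mpr hij)) (he_pos ω).le)
    _ ≤ ENNReal.ofReal (∫ ω, |r (X ω)| ∂ν) := by
        refine iSup_le fun n => ?_
        rw [← ofReal_integral_eq_lintegral_ofReal (htrunc_int n)
          (Filter.Eventually.of_forall fun ω =>
            mul_nonneg (le_min (abs_nonneg _) n.cast_nonneg) (he_pos ω).le)]
        exact ENNReal.ofReal_le_ofReal (hbound n)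
    _ < ⊤ := ENNReal.ofReal_lt_top

/-- The augmentation term has mean zero under the source population. -/
lemma key_zero_aux {Ω : Type*} [MeasurableSpace Ω] {𝒳 : Type*} [MeasurableSpace 𝒳]
    (ν : Measure Ω) [IsProbabilityMeasure ν]
    (X : Ω → 𝒳) (hX : Measurable X) (e W : Ω → ℝ) (he : Measurable e)
    (he_pos : ∀ ω, 0 < e ω) (he_int : Integrable e ν)
    (hWe_int : Integrable (fun ω => W ω * e ω) ν)
    (c r φ : 𝒳 → ℝ) (hc : Measurable c) (hr : Measurable r) (hφ : Measurable φ)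
    (hcver : (fun ω => c (X ω)) =ᵐ[ν] ν[e | MeasurableSpace.comap X inferInstance])
    (hcpos : ∀ᵐ ω ∂ν, 0 < c (X ω))
    (hrver : (fun ω => r (X ω)) =ᵐ[ν]
      ν[(fun ω => W ω * e ω) | MeasurableSpace.comap X inferInstance])
    (hZ_int : Integrable (fun ω => φ (X ω) * (W ω * e ω - r (X ω) / c (X ω) * e ω)) ν) :
    ∫ ω, φ (X ω) * (W ω * e ω - r (X ω) / c (X ω) * e ω) ∂ν = 0 := by
  have hm : MeasurableSpace.comap X inferInstance ≤ ‹MeasurableSpace Ω› := hX.comap_le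
  have hXm : @Measurable Ω 𝒳 (MeasurableSpace.comap X inferInstance) _ X :=
    fun s hs => ⟨s, hs, rfl⟩
  have hcomp : ∀ {ψ : 𝒳 → ℝ}, Measurable ψ →
      StronglyMeasurable[MeasurableSpace.comap X inferInstance] fun ω => ψ (X ω) :=
    fun hψ => (hψ.comp hXm).stronglyMeasurable
  have hb_meas : Measurable fun x => r x / c x := hr.div hc
  have hr_int : Integrable (fun ω => r (X ω)) ν := integrable_condExp.congr hrver.symm
  have hbe_int : Integrable (fun ω => r (X ω) / c (X ω) * e ω) ν :=
    be_integrable_aux ν X hX e he he_pos he_int c r hc hr hcver hcpos hr_int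
  -- conditional expectation of b(X) * e is r(X)
  have hbe_ce : ν[(fun ω => r (X ω) / c (X ω) * e ω) | MeasurableSpace.comap X inferInstance]
      =ᵐ[ν] fun ω => r (X ω) := by
    have hpull := condExp_mul_of_stronglyMeasurable_left (μ := ν) (hcomp hb_meas) hbe_int he_int
    refine hpull.trans ?_
    filter_upwards [hcver, hcpos] with ω h1 h2
    simp only [Pi.mul_apply]
    rw [← h1, div_mul_cancel₀ _ h2.ne']
  -- conditional expectation of the residual is zero
  have hg_int : Integrable (fun ω => W ω * e ω - r (X ω) / c (X ω) * e ω) ν :=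
    hWe_int.sub hbe_int
  have hg_ce : ν[(fun ω => W ω * e ω - r (X ω) / c (X ω) * e ω) |
      MeasurableSpace.comap X inferInstance] =ᵐ[ν] 0 := by
    have hsub := condExp_sub (m := MeasurableSpace.comap X inferInstance)
      (μ := ν) hWe_int hbe_int
    refine hsub.trans ?_
    filter_upwards [hrver, hbe_ce] with ω h1 h2
    simp only [Pi.sub_apply, Pi.zero_apply]
    rw [← h1, h2]
    ring
  -- pull out the σ(X)-measurable factor φ(X)
  have hZ_ce : ν[(fun ω => φ (X ω) * (W ω * e ω - r (X ω) / c (X ω) * e ω)) |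
      MeasurableSpace.comap X inferInstance] =ᵐ[ν] 0 := by
    have hpull := condExp_mul_of_stronglyMeasurable_left (μ := ν) (hcomp hφ) hZ_int hg_int
    refine hpull.trans ?_
    filter_upwards [hg_ce] with ω h1
    simp only [Pi.mul_apply, Pi.zero_apply]
    rw [h1]
    simp
  calc ∫ ω, φ (X ω) * (W ω * e ω - r (X ω) / c (X ω) * e ω) ∂ν
      = ∫ ω, (ν[(fun ω => φ (X ω) * (W ω * e ω - r (X ω) / c (X ω) * e ω)) |
          MeasurableSpace.comap X inferInstance]) ω ∂ν := (integral_condExp hm).symm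
    _ = 0 := by rw [integral_congr_ae hZ_ce]; simp

/-- The population augmented functional for the non-nested design, evaluated at the true
nuisance functions `p`, `c`, `b = r/c`, equals the identified risk `E_{μ₀}[b(X)]`; and if
in addition the exponential tilt hypothesis holds (`b∘X` is a version of
`E_{μ₀}[W | σ(X)]`), this common value equals the target-population risk
`φ(η) = E_{μ₀}[W]` — equivalently, the influence function `Φ¹(η)` at the true nuisances
has μ-mean zero. -/
theorem augmented_functional_nonnested_at_truth
    {Ω : Type*} [MeasurableSpace Ω] {𝒳 : Type*} [MeasurableSpace 𝒳]
    (μ : Measure Ω) [IsProbabilityMeasure μ]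
    (X : Ω → 𝒳) (Y : Ω → ℝ) (S : Ω → Bool)
    (hX : Measurable X) (hY : Measurable Y) (hS : Measurable S)
    (hS1 : 0 < μ {ω | S ω = true}) (hS0 : 0 < μ {ω | S ω = false})
    (η : ℝ) (q : ℝ → ℝ) (hq : Measurable q)
    (ℓ : 𝒳 → ℝ → ℝ) (hℓ : Measurable (Function.uncurry ℓ))
    (c r : 𝒳 → ℝ) (hc : Measurable c) (hr : Measurable r)
    (hexp_int : Integrable (fun ω => Real.exp (η * q (Y ω))) (μ[|{ω | S ω = true}]))
    (hWexp_int : Integrable (fun ω => ℓ (X ω) (Y ω) * Real.exp (η * q (Y ω)))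
      (μ[|{ω | S ω = true}]))
    (hcver : (fun ω => c (X ω)) =ᵐ[μ[|{ω | S ω = true}]]
      (μ[|{ω | S ω = true}])[fun ω => Real.exp (η * q (Y ω)) |
        MeasurableSpace.comap X inferInstance])
    (hcpos : ∀ᵐ ω ∂(μ[|{ω | S ω = true}]), 0 < c (X ω))
    (hrver : (fun ω => r (X ω)) =ᵐ[μ[|{ω | S ω = true}]]
      (μ[|{ω | S ω = true}])[fun ω => ℓ (X ω) (Y ω) * Real.exp (η * q (Y ω)) |
        MeasurableSpace.comap X inferInstance])
    -- the true propensity, with positivity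
    (p : 𝒳 → ℝ) (hp : Measurable p)
    (hpver : (fun ω => p (X ω)) =ᵐ[μ]
      μ[fun ω => if S ω then (1 : ℝ) else 0 | MeasurableSpace.comap X inferInstance])
    (hppos : ∀ᵐ ω ∂μ, 0 < p (X ω))
    (hW_int₀ : Integrable (fun ω => ℓ (X ω) (Y ω)) (μ[|{ω | S ω = false}]))
    (hb_int₀ : Integrable (fun ω => r (X ω) / c (X ω)) (μ[|{ω | S ω = false}]))
    (hintegrand : Integrable (fun ω =>
      if S ω then ((1 - p (X ω)) * Real.exp (η * q (Y ω)) / (p (X ω) * c (X ω)))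
        * (ℓ (X ω) (Y ω) - r (X ω) / c (X ω))
      else r (X ω) / c (X ω)) μ) :
    ((μ {ω | S ω = false}).toReal⁻¹
        * ∫ ω, (if S ω then
              ((1 - p (X ω)) * Real.exp (η * q (Y ω)) / (p (X ω) * c (X ω)))
                * (ℓ (X ω) (Y ω) - r (X ω) / c (X ω))
            else r (X ω) / c (X ω)) ∂μ
      = ∫ ω, r (X ω) / c (X ω) ∂(μ[|{ω | S ω = false}])) ∧
    -- under the exponential tilt hypothesis the common value is φ(η) = E_{μ₀}[W]
    (((fun ω => r (X ω) / c (X ω)) =ᵐ[μ[|{ω | S ω = false}]]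
        (μ[|{ω | S ω = false}])[fun ω => ℓ (X ω) (Y ω) |
          MeasurableSpace.comap X inferInstance]) →
      (μ {ω | S ω = false}).toReal⁻¹
          * ∫ ω, (if S ω then
                ((1 - p (X ω)) * Real.exp (η * q (Y ω)) / (p (X ω) * c (X ω)))
                  * (ℓ (X ω) (Y ω) - r (X ω) / c (X ω))
              else r (X ω) / c (X ω)) ∂μ
        = ∫ ω, ℓ (X ω) (Y ω) ∂(μ[|{ω | S ω = false}])) := by
  classical
  have hs1m : MeasurableSet {ω | S ω = true} := hS (measurableSet_singleton true)
  have hs0m : MeasurableSet {ω | S ω = false} := hS (measurableSet_singleton false)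
  have hμ1ne : μ {ω | S ω = true} ≠ 0 := hS1.ne'
  have hμ0ne : μ {ω | S ω = false} ≠ 0 := hS0.ne'
  haveI hP1 : IsProbabilityMeasure (μ[|{ω | S ω = true}]) :=
    cond_isProbabilityMeasure hμ1ne
  haveI hP0 : IsProbabilityMeasure (μ[|{ω | S ω = false}]) :=
    cond_isProbabilityMeasure hμ0ne
  -- on {S = true} the integrand is the augmentation term
  have hres_eq : ∀ᵐ ω ∂(μ.restrict {ω | S ω = true}),
      (if S ω then ((1 - p (X ω)) * Real.exp (η * q (Y ω)) / (p (X ω) * c (X ω)))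
          * (ℓ (X ω) (Y ω) - r (X ω) / c (X ω))
        else r (X ω) / c (X ω))
      = ((1 - p (X ω)) / (p (X ω) * c (X ω)))
          * (ℓ (X ω) (Y ω) * Real.exp (η * q (Y ω))
              - r (X ω) / c (X ω) * Real.exp (η * q (Y ω))) := by
    rw [ae_restrict_iff' hs1m]
    refine Filter.Eventually.of_forall fun ω hω => ?_
    have hSω : S ω = true := hω
    rw [if_pos hSω]
    ring
  -- on {S = false} the integrand is b(X)
  have hres0_eq : ∀ᵐ ω ∂(μ.restrict {ω | S ω = false}),
      (if S ω then ((1 - p (X ω)) * Real.exp (η * q (Y ω)) / (p (X ω) * c (X ω)))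
          * (ℓ (X ω) (Y ω) - r (X ω) / c (X ω))
        else r (X ω) / c (X ω))
      = r (X ω) / c (X ω) := by
    rw [ae_restrict_iff' hs0m]
    refine Filter.Eventually.of_forall fun ω hω => ?_
    have : S ω = false := hω
    rw [if_neg (by simp [this])]
  -- integrability of the augmentation term under μ₁
  have hint_s1 : Integrable (fun ω => ((1 - p (X ω)) / (p (X ω) * c (X ω)))
      * (ℓ (X ω) (Y ω) * Real.exp (η * q (Y ω))
          - r (X ω) / c (X ω) * Real.exp (η * q (Y ω))))
      (μ[|{ω | S ω = true}]) := by
    have h1 := (hintegrand.restrict (s := {ω | S ω = true})).congr hres_eq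
    show Integrable _ ((μ {ω | S ω = true})⁻¹ • μ.restrict {ω | S ω = true})
    exact h1.smul_measure (ENNReal.inv_ne_top.mpr hμ1ne)
  -- the augmentation term has μ₁-mean zero
  have hzero : ∫ ω, ((1 - p (X ω)) / (p (X ω) * c (X ω)))
      * (ℓ (X ω) (Y ω) * Real.exp (η * q (Y ω))
          - r (X ω) / c (X ω) * Real.exp (η * q (Y ω)))
      ∂(μ[|{ω | S ω = true}]) = 0 :=
    key_zero_aux (μ[|{ω | S ω = true}]) X hX
      (fun ω => Real.exp (η * q (Y ω))) (fun ω => ℓ (X ω) (Y ω))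
      (Real.measurable_exp.comp ((hq.comp hY).const_mul η))
      (fun ω => Real.exp_pos _) hexp_int hWexp_int
      c r (fun x => (1 - p x) / (p x * c x)) hc hr
      ((measurable_const.sub hp).div (hp.mul hc))
      hcver hcpos hrver hint_s1
  -- hence the set integral over {S = true} vanishes
  have hcondint : ∀ (f : Ω → ℝ) (s : Set Ω),
      ∫ ω, f ω ∂(μ[|s]) = ((μ s)⁻¹).toReal * ∫ ω in s, f ω ∂μ := by
    intro f s
    show ∫ ω, f ω ∂((μ s)⁻¹ • μ.restrict s) = _
    rw [integral_smul_measure, smul_eq_mul]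
  have hk1 : ((μ {ω | S ω = true})⁻¹).toReal ≠ 0 := by
    simp [ENNReal.toReal_eq_zero_iff, ENNReal.inv_eq_zero, ENNReal.inv_eq_top,
      hμ1ne, measure_ne_top]
  have hintS1 : ∫ ω in {ω | S ω = true},
      (if S ω then ((1 - p (X ω)) * Real.exp (η * q (Y ω)) / (p (X ω) * c (X ω)))
          * (ℓ (X ω) (Y ω) - r (X ω) / c (X ω))
        else r (X ω) / c (X ω)) ∂μ = 0 := by
    rw [integral_congr_ae hres_eq]
    have h3 := hcondint (fun ω => ((1 - p (X ω)) / (p (X ω) * c (X ω)))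
      * (ℓ (X ω) (Y ω) * Real.exp (η * q (Y ω))
          - r (X ω) / c (X ω) * Real.exp (η * q (Y ω)))) {ω | S ω = true}
    rw [hzero] at h3
    exact (mul_eq_zero.mp h3.symm).resolve_left hk1
  have hcompl : {ω | S ω = true}ᶜ = {ω | S ω = false} := by
    ext ω; simp [Bool.not_eq_true]
  have hmain : (μ {ω | S ω = false}).toReal⁻¹
      * ∫ ω, (if S ω then
            ((1 - p (X ω)) * Real.exp (η * q (Y ω)) / (p (X ω) * c (X ω)))
              * (ℓ (X ω) (Y ω) - r (X ω) / c (X ω))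
          else r (X ω) / c (X ω)) ∂μ
      = ∫ ω, r (X ω) / c (X ω) ∂(μ[|{ω | S ω = false}]) := by
    rw [← integral_add_compl hs1m hintegrand, hcompl, hintS1, zero_add,
      integral_congr_ae hres0_eq, hcondint, ENNReal.toReal_inv]
  refine ⟨hmain, fun htilt => ?_⟩
  rw [hmain, integral_congr_ae htilt, integral_condExp hX.comap_le]
end

section
/- Assume positivity: 0 < p(X) < 1 μ-a.s. where p∘X is a version of E_μ[1_{S=1} | σ(X)], and let a(x) = ln((1 − p(x))/p(x)) − ln c(x) be the true selection-model offset. Then for every measurable b* : 𝒳 → ℝ (whether or not it equals the true tilted conditional loss b) making the displayed integrands μ-integrable, the nested-design augmented functional in the alternative parameterization is doubly robust at the true offset: E_μ[ 1_{S=1} · W + 1_{S=0} · b*(X) + 1_{S=1} · e^{a(X) + η q(Y)} · (W − b*(X)) ] = E_μ[1_{S=1} W] + E_μ[1_{S=0} b(X)], the identified nested risk ψ(η). -/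
open MeasureTheory ProbabilityTheory Real

open Filter Topology in
/-- Tilted pull-out lemma: for an `m`-measurable nonnegative weight `g` and `m`-measurable `h`,
with `u`, `f` integrable and `g * (u - h * f)` integrable, we may replace `u`, `f` by their
conditional expectations inside the integral. -/
lemma aux_tilted {Ω : Type*} [m0 : MeasurableSpace Ω] (μ : Measure Ω) [IsProbabilityMeasure μ]
    {m : MeasurableSpace Ω} (hm : m ≤ m0)
    {g h u f : Ω → ℝ}
    (hg : StronglyMeasurable[m] g) (hh : StronglyMeasurable[m] h)
    (hg0 : ∀ ω, 0 ≤ g ω)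
    (hu : Integrable u μ) (hf : Integrable f μ)
    (hG : Integrable (fun ω => g ω * (u ω - h ω * f ω)) μ) :
    Integrable (fun ω => g ω * ((μ[u|m]) ω - h ω * (μ[f|m]) ω)) μ ∧
    ∫ ω, g ω * (u ω - h ω * f ω) ∂μ
      = ∫ ω, g ω * ((μ[u|m]) ω - h ω * (μ[f|m]) ω) ∂μ := by
  haveI : SigmaFinite (μ.trim hm) := by
    haveI : IsFiniteMeasure (μ.trim hm) := isFiniteMeasure_trim hm
    infer_instance
  set U : Ω → ℝ := μ[u|m] with hU
  set F : Ω → ℝ := μ[f|m] with hF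
  set gn : ℕ → Ω → ℝ :=
    fun n => Set.indicator {ω | |h ω| ≤ (n : ℝ)} (fun ω => min (g ω) (n : ℝ)) with hgndef
  have hset : ∀ n : ℕ, MeasurableSet[m] {ω | |h ω| ≤ (n : ℝ)} := fun n =>
    @measurableSet_le _ _ _ _ _ m _ _ _ _ _ hh.measurable.abs measurable_const
  have hgn_sm : ∀ n, StronglyMeasurable[m] (gn n) := fun n =>
    ((hg.measurable.min (@measurable_const _ _ _ m _)).stronglyMeasurable).indicator (hset n)
  have hgn_nonneg : ∀ n ω, 0 ≤ gn n ω := by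
    intro n ω
    simp only [hgndef]
    exact Set.indicator_nonneg (fun ω _ => le_min (hg0 ω) (Nat.cast_nonneg n)) ω
  have hgn_le_g : ∀ n ω, gn n ω ≤ g ω := by
    intro n ω
    simp only [hgndef]
    by_cases hω : ω ∈ {ω | |h ω| ≤ (n : ℝ)}
    · rw [Set.indicator_of_mem hω]; exact min_le_left _ _
    · rw [Set.indicator_of_notMem hω]; exact hg0 ω
  have hgn_bdd : ∀ n ω, |gn n ω| ≤ (n : ℝ) := by
    intro n ω
    rw [abs_of_nonneg (hgn_nonneg n ω)]
    simp only [hgndef]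
    by_cases hω : ω ∈ {ω | |h ω| ≤ (n : ℝ)}
    · rw [Set.indicator_of_mem hω]; exact min_le_right _ _
    · rw [Set.indicator_of_notMem hω]; exact Nat.cast_nonneg n
  have hgnh_bdd : ∀ n ω, |gn n ω * h ω| ≤ (n : ℝ) * n := by
    intro n ω
    by_cases hω : ω ∈ {ω | |h ω| ≤ (n : ℝ)}
    · rw [abs_mul]
      exact mul_le_mul (hgn_bdd n ω) hω (abs_nonneg _) (Nat.cast_nonneg n)
    · simp only [hgndef, Set.indicator_of_notMem hω, zero_mul, abs_zero]
      positivity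
  have hgn_tend : ∀ ω, Tendsto (fun n => gn n ω) atTop (𝓝 (g ω)) := by
    intro ω
    obtain ⟨N1, hN1⟩ := exists_nat_ge |h ω|
    obtain ⟨N2, hN2⟩ := exists_nat_ge (g ω)
    refine tendsto_const_nhds.congr' ?_
    rw [EventuallyEq, eventually_atTop]
    refine ⟨max N1 N2, fun n hn => ?_⟩
    have h1 : |h ω| ≤ (n : ℝ) :=
      hN1.trans (by exact_mod_cast le_trans (le_max_left _ _) hn)
    have h2 : g ω ≤ (n : ℝ) :=
      hN2.trans (by exact_mod_cast le_trans (le_max_right _ _) hn)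
    simp only [hgndef, Set.indicator_of_mem (show ω ∈ {ω | |h ω| ≤ (n:ℝ)} from h1)]
    exact (min_eq_left h2).symm
  -- integrability of the truncated products
  have hgnu : ∀ n, Integrable (fun ω => gn n ω * u ω) μ := fun n =>
    hu.bdd_mul ((hgn_sm n).mono hm).aestronglyMeasurable
      (c := n) (Eventually.of_forall fun ω => by rw [Real.norm_eq_abs]; exact hgn_bdd n ω)
  have hgnhf : ∀ n, Integrable (fun ω => gn n ω * h ω * f ω) μ := fun n =>
    hf.bdd_mul (((hgn_sm n).mul hh).mono hm).aestronglyMeasurable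
      (c := n * n) (Eventually.of_forall fun ω => by rw [Real.norm_eq_abs]; exact hgnh_bdd n ω)
  have hgnU : ∀ n, Integrable (fun ω => gn n ω * U ω) μ := fun n =>
    integrable_condExp.bdd_mul ((hgn_sm n).mono hm).aestronglyMeasurable
      (c := n) (Eventually.of_forall fun ω => by rw [Real.norm_eq_abs]; exact hgn_bdd n ω)
  have hgnhF : ∀ n, Integrable (fun ω => gn n ω * h ω * F ω) μ := fun n =>
    integrable_condExp.bdd_mul (((hgn_sm n).mul hh).mono hm).aestronglyMeasurable
      (c := n * n) (Eventually.of_forall fun ω => by rw [Real.norm_eq_abs]; exact hgnh_bdd n ω)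
  set Φ : ℕ → Ω → ℝ := fun n ω => gn n ω * (u ω - h ω * f ω) with hΦdef
  set Ψ : ℕ → Ω → ℝ := fun n ω => gn n ω * (U ω - h ω * F ω) with hΨdef
  have hΦ_int : ∀ n, Integrable (Φ n) μ := by
    intro n
    have : (fun ω => gn n ω * u ω - gn n ω * h ω * f ω) = Φ n := by
      funext ω; simp only [hΦdef]; ring
    exact this ▸ (hgnu n).sub (hgnhf n)
  have hΨ_int : ∀ n, Integrable (Ψ n) μ := by
    intro n
    have : (fun ω => gn n ω * U ω - gn n ω * h ω * F ω) = Ψ n := by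
      funext ω; simp only [hΨdef]; ring
    exact this ▸ (hgnU n).sub (hgnhF n)
  -- conditional expectation of Φ n is Ψ n
  have hcondΦ : ∀ n, μ[Φ n|m] =ᵐ[μ] Ψ n := by
    intro n
    have h1 : μ[fun ω => gn n ω * u ω|m] =ᵐ[μ] fun ω => gn n ω * U ω :=
      condExp_mul_of_stronglyMeasurable_left (hgn_sm n) (hgnu n) hu
    have h2 : μ[fun ω => gn n ω * h ω * f ω|m] =ᵐ[μ] fun ω => gn n ω * h ω * F ω :=
      condExp_mul_of_stronglyMeasurable_left ((hgn_sm n).mul hh) (hgnhf n) hf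
    have h3 : μ[Φ n|m] =ᵐ[μ]
        (fun ω => (μ[fun ω => gn n ω * u ω|m]) ω - (μ[fun ω => gn n ω * h ω * f ω|m]) ω) := by
      have : Φ n = fun ω => gn n ω * u ω - gn n ω * h ω * f ω := by
        funext ω; simp only [hΦdef]; ring
      rw [this]
      exact condExp_sub (hgnu n) (hgnhf n) m
    refine h3.trans ?_
    filter_upwards [h1, h2] with ω e1 e2
    simp only [e1, e2, hΨdef]
    ring
  have hIn : ∀ n, ∫ ω, Φ n ω ∂μ = ∫ ω, Ψ n ω ∂μ := by
    intro n
    rw [← integral_condExp hm (f := Φ n)]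
    exact integral_congr_ae (hcondΦ n)
  -- dominated convergence for Φ
  set bound : Ω → ℝ := fun ω => |g ω * (u ω - h ω * f ω)| with hbdef
  have hbound_int : Integrable bound μ := hG.abs
  have hΦ_bound : ∀ n, ∀ᵐ ω ∂μ, ‖Φ n ω‖ ≤ bound ω := by
    intro n
    refine Eventually.of_forall fun ω => ?_
    simp only [hΦdef, hbdef, Real.norm_eq_abs, abs_mul]
    exact mul_le_mul_of_nonneg_right
      (by rw [abs_of_nonneg (hgn_nonneg n ω), abs_of_nonneg (hg0 ω)]; exact hgn_le_g n ω)
      (abs_nonneg _)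
  have hΦ_tend : ∀ ω, Tendsto (fun n => Φ n ω) atTop (𝓝 (g ω * (u ω - h ω * f ω))) :=
    fun ω => (hgn_tend ω).mul_const _
  have hDCT1 : Tendsto (fun n => ∫ ω, Φ n ω ∂μ) atTop
      (𝓝 (∫ ω, g ω * (u ω - h ω * f ω) ∂μ)) := by
    refine tendsto_integral_of_dominated_convergence bound (fun n => (hΦ_int n).1)
      hbound_int hΦ_bound (Eventually.of_forall hΦ_tend)
  -- dominated convergence for Ψ
  set D : Ω → ℝ := μ[bound|m] with hDdef
  have hD_int : Integrable D μ := integrable_condExp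
  have hΦ_le : ∀ n, Φ n ≤ᵐ[μ] bound :=
    fun n => (hΦ_bound n).mono fun ω hω => (le_abs_self _).trans (by simpa using hω)
  have hΦ_ge : ∀ n, (fun ω => -bound ω) ≤ᵐ[μ] Φ n :=
    fun n => (hΦ_bound n).mono fun ω hω => by
      have h1 : |Φ n ω| ≤ bound ω := by simpa using hω
      show -bound ω ≤ Φ n ω
      linarith [neg_abs_le (Φ n ω)]
  have hΨ_bound : ∀ n, ∀ᵐ ω ∂μ, ‖Ψ n ω‖ ≤ D ω := by
    intro n
    have hle : μ[Φ n|m] ≤ᵐ[μ] μ[bound|m] :=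
      condExp_mono (hΦ_int n) hbound_int (hΦ_le n)
    have hge : μ[fun ω => -bound ω|m] ≤ᵐ[μ] μ[Φ n|m] :=
      condExp_mono hbound_int.neg (hΦ_int n) (hΦ_ge n)
    have hneg : μ[fun ω => -bound ω|m] =ᵐ[μ] fun ω => -D ω := by
      exact condExp_neg (μ := μ) (m := m) bound
    filter_upwards [hcondΦ n, hle, hge, hneg] with ω e1 e2 e3 e4
    rw [Real.norm_eq_abs, abs_le]
    constructor
    · rw [← e1]; rw [e4] at e3; linarith
    · rw [← e1]; exact e2
  have hΨ_tend : ∀ ω, Tendsto (fun n => Ψ n ω) atTop (𝓝 (g ω * (U ω - h ω * F ω))) :=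
    fun ω => (hgn_tend ω).mul_const _
  have hDCT2 : Tendsto (fun n => ∫ ω, Ψ n ω ∂μ) atTop
      (𝓝 (∫ ω, g ω * (U ω - h ω * F ω) ∂μ)) :=
    tendsto_integral_of_dominated_convergence D (fun n => (hΨ_int n).1)
      hD_int hΨ_bound (Eventually.of_forall hΨ_tend)
  -- integrability of the limit
  have hae_bound : ∀ᵐ ω ∂μ, ∀ n, ‖Ψ n ω‖ ≤ D ω := ae_all_iff.mpr hΨ_bound
  have hlim_int : Integrable (fun ω => g ω * (U ω - h ω * F ω)) μ := by
    refine Integrable.mono' hD_int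
      ((hg.mono hm).aestronglyMeasurable.mul
        ((stronglyMeasurable_condExp.mono hm).aestronglyMeasurable.sub
          ((hh.mono hm).aestronglyMeasurable.mul
            (stronglyMeasurable_condExp.mono hm).aestronglyMeasurable))) ?_
    filter_upwards [hae_bound] with ω hω
    have : Tendsto (fun n => ‖Ψ n ω‖) atTop (𝓝 ‖g ω * (U ω - h ω * F ω)‖) :=
      (hΨ_tend ω).norm
    exact le_of_tendsto this (Eventually.of_forall hω)
  refine ⟨hlim_int, ?_⟩
  have := hDCT1
  rw [show (fun n => ∫ ω, Φ n ω ∂μ) = fun n => ∫ ω, Ψ n ω ∂μ from funext hIn] at this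
  exact tendsto_nhds_unique this hDCT2

lemma aux_pullout {Ω : Type*} [m0 : MeasurableSpace Ω] (μ : Measure Ω) [IsProbabilityMeasure μ]
    {m : MeasurableSpace Ω} (hm : m ≤ m0)
    {φ ind : Ω → ℝ} (hφ : StronglyMeasurable[m] φ) (hind : Integrable ind μ)
    (hprod : Integrable (fun ω => φ ω * ind ω) μ) :
    ∫ ω, φ ω * ind ω ∂μ = ∫ ω, φ ω * (μ[ind|m]) ω ∂μ := by
  haveI : SigmaFinite (μ.trim hm) := by
    haveI : IsFiniteMeasure (μ.trim hm) := isFiniteMeasure_trim hm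
    infer_instance
  rw [← integral_condExp hm (f := fun ω => φ ω * ind ω)]
  exact integral_congr_ae (condExp_mul_of_stronglyMeasurable_left hφ hprod hind)

/-- Case 2 of the nested-design double-robustness theorem (Appendix D): at the true
selection-model offset `a(x) = ln((1 − p(x))/p(x)) − ln c(x)`, the nested-design augmented
functional in the alternative parameterization equals the identified nested risk
`ψ(η) = E_μ[1_{S=1} W] + E_μ[1_{S=0} b(X)]` for *every* measurable `b*`, whether or not it
equals the true tilted conditional loss `b = r/c`. -/
theorem nested_augmented_functional_doubly_robust_selection
    {Ω : Type*} [MeasurableSpace Ω] {𝒳 : Type*} [MeasurableSpace 𝒳]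
    (μ : Measure Ω) [IsProbabilityMeasure μ]
    (X : Ω → 𝒳) (Y : Ω → ℝ) (S : Ω → Bool)
    (hX : Measurable X) (hY : Measurable Y) (hS : Measurable S)
    (hS1 : 0 < μ {ω | S ω = true}) (hS0 : 0 < μ {ω | S ω = false})
    (η : ℝ) (q : ℝ → ℝ) (hq : Measurable q)
    (ℓ : 𝒳 → ℝ → ℝ) (hℓ : Measurable (Function.uncurry ℓ))
    (c r : 𝒳 → ℝ) (hc : Measurable c) (hr : Measurable r)
    (hexp_int : Integrable (fun ω => Real.exp (η * q (Y ω))) (μ[|{ω | S ω = true}]))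
    (hWexp_int : Integrable (fun ω => ℓ (X ω) (Y ω) * Real.exp (η * q (Y ω)))
      (μ[|{ω | S ω = true}]))
    (hcver : (fun ω => c (X ω)) =ᵐ[μ[|{ω | S ω = true}]]
      (μ[|{ω | S ω = true}])[fun ω => Real.exp (η * q (Y ω)) |
        MeasurableSpace.comap X inferInstance])
    (hcpos : ∀ᵐ ω ∂(μ[|{ω | S ω = true}]), 0 < c (X ω))
    (hrver : (fun ω => r (X ω)) =ᵐ[μ[|{ω | S ω = true}]]
      (μ[|{ω | S ω = true}])[fun ω => ℓ (X ω) (Y ω) * Real.exp (η * q (Y ω)) |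
        MeasurableSpace.comap X inferInstance])
    -- the true propensity, with positivity 0 < p(X) < 1 μ-a.s.
    (p : 𝒳 → ℝ) (hp : Measurable p)
    (hpver : (fun ω => p (X ω)) =ᵐ[μ]
      μ[fun ω => if S ω then (1 : ℝ) else 0 | MeasurableSpace.comap X inferInstance])
    (hppos : ∀ᵐ ω ∂μ, 0 < p (X ω) ∧ p (X ω) < 1)
    -- the true selection-model offset
    (a : 𝒳 → ℝ)
    (ha : ∀ x, a x = Real.log ((1 - p x) / p x) - Real.log (c x))
    -- an arbitrary measurable b* (possibly ≠ the true tilted conditional loss b = r/c)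
    (bstar : 𝒳 → ℝ) (hbstar : Measurable bstar)
    (hind_int : Integrable (fun ω => if S ω then ℓ (X ω) (Y ω) else 0) μ)
    (hb_int : Integrable (fun ω => if S ω then 0 else r (X ω) / c (X ω)) μ)
    (hbstar_int : Integrable (fun ω => if S ω then 0 else bstar (X ω)) μ)
    (hwt_int : Integrable (fun ω =>
      if S ω then Real.exp (a (X ω) + η * q (Y ω)) * (ℓ (X ω) (Y ω) - bstar (X ω))
      else 0) μ)
    (hintegrand : Integrable (fun ω =>
      if S ω then ℓ (X ω) (Y ω)
        + Real.exp (a (X ω) + η * q (Y ω)) * (ℓ (X ω) (Y ω) - bstar (X ω))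
      else bstar (X ω)) μ) :
    ∫ ω, (if S ω then ℓ (X ω) (Y ω)
          + Real.exp (a (X ω) + η * q (Y ω)) * (ℓ (X ω) (Y ω) - bstar (X ω))
        else bstar (X ω)) ∂μ
      = (∫ ω, (if S ω then ℓ (X ω) (Y ω) else 0) ∂μ)
        + ∫ ω, (if S ω then 0 else r (X ω) / c (X ω)) ∂μ := by
  set s : Set Ω := {ω | S ω = true} with hs_def
  have hs_meas : MeasurableSet s := hS (measurableSet_singleton true)
  have hμs_ne : μ s ≠ 0 := ne_of_gt hS1
  have hμs_fin : μ s ≠ ⊤ := measure_ne_top μ s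
  haveI hP1 : IsProbabilityMeasure (μ[|s]) := cond_isProbabilityMeasure hμs_ne
  set μ₁ : Measure Ω := μ[|s] with hμ₁def
  have hm : MeasurableSpace.comap X inferInstance ≤ _ := hX.comap_le
  have hX_m : Measurable[MeasurableSpace.comap X inferInstance] X :=
    Measurable.of_comap_le le_rfl
  have hκ0 : (μ s).toReal ≠ 0 := (ENNReal.toReal_pos hμs_ne hμs_fin).ne'
  -- bridge between μ and μ₁
  have hif_eq : ∀ (h : Ω → ℝ), (fun ω => if S ω then h ω else 0) = s.indicator h := by
    intro h; funext ω
    by_cases hω : S ω = true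
    · rw [if_pos hω, Set.indicator_of_mem (show ω ∈ s from hω)]
    · rw [if_neg hω, Set.indicator_of_notMem (show ω ∉ s from hω)]
  have hint_iff : ∀ (h : Ω → ℝ),
      Integrable (fun ω => if S ω then h ω else 0) μ ↔ Integrable h μ₁ := by
    intro h
    have h1 : Integrable h μ₁ ↔ IntegrableOn h s μ := by
      show Integrable h ((μ s)⁻¹ • μ.restrict s) ↔ _
      exact integrable_smul_measure (ENNReal.inv_ne_zero.mpr hμs_fin)
        (ENNReal.inv_ne_top.mpr hμs_ne)
    rw [hif_eq h, integrable_indicator_iff hs_meas, h1]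
  have hI_eq : ∀ (h : Ω → ℝ),
      ∫ ω, (if S ω then h ω else 0) ∂μ = (μ s).toReal * ∫ ω, h ω ∂μ₁ := by
    intro h
    have h2 : ∫ ω, h ω ∂μ₁ = ((μ s)⁻¹).toReal * ∫ ω in s, h ω ∂μ := by
      show ∫ ω, h ω ∂((μ s)⁻¹ • μ.restrict s) = _
      rw [integral_smul_measure]; rfl
    rw [hif_eq h, integral_indicator hs_meas, h2, ENNReal.toReal_inv, ← mul_assoc,
      mul_inv_cancel₀ hκ0, one_mul]
  -- measurability
  have ha_meas : Measurable a := by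
    have h1 : a = fun x => Real.log ((1 - p x) / p x) - Real.log (c x) := funext ha
    rw [h1]
    exact (Real.measurable_log.comp ((measurable_const.sub hp).div hp)).sub
      (Real.measurable_log.comp hc)
  have hg_sm : StronglyMeasurable[MeasurableSpace.comap X inferInstance] (fun ω => Real.exp (a (X ω))) :=
    ((Real.measurable_exp.comp ha_meas).comp hX_m).stronglyMeasurable
  have hh_sm : StronglyMeasurable[MeasurableSpace.comap X inferInstance] (fun ω => bstar (X ω)) :=
    (hbstar.comp hX_m).stronglyMeasurable
  -- tilted pull-out under μ₁
  have hZint : Integrable (fun ω =>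
      Real.exp (a (X ω) + η * q (Y ω)) * (ℓ (X ω) (Y ω) - bstar (X ω))) μ₁ :=
    (hint_iff _).1 hwt_int
  have hG1 : Integrable (fun ω => Real.exp (a (X ω)) *
      (ℓ (X ω) (Y ω) * Real.exp (η * q (Y ω))
        - bstar (X ω) * Real.exp (η * q (Y ω)))) μ₁ := by
    refine hZint.congr (Filter.Eventually.of_forall fun ω => ?_)
    simp only [Real.exp_add]; ring
  obtain ⟨hΨint, hEq1⟩ := aux_tilted μ₁ hm hg_sm hh_sm (fun ω => (Real.exp_pos _).le)
    hWexp_int hexp_int hG1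
  have hver : (fun ω => Real.exp (a (X ω)) *
        ((μ₁[fun ω => ℓ (X ω) (Y ω) * Real.exp (η * q (Y ω))|MeasurableSpace.comap X inferInstance]) ω
          - bstar (X ω) * (μ₁[fun ω => Real.exp (η * q (Y ω))|MeasurableSpace.comap X inferInstance]) ω)) =ᵐ[μ₁]
      (fun ω => Real.exp (a (X ω)) * (r (X ω) - bstar (X ω) * c (X ω))) := by
    filter_upwards [hrver, hcver] with ω h1 h2
    rw [← h1, ← h2]
  have hφint1 : Integrable
      (fun ω => Real.exp (a (X ω)) * (r (X ω) - bstar (X ω) * c (X ω))) μ₁ :=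
    hΨint.congr hver
  have hT : ∫ ω, (if S ω then
        Real.exp (a (X ω) + η * q (Y ω)) * (ℓ (X ω) (Y ω) - bstar (X ω)) else 0) ∂μ
      = ∫ ω, (if S ω then
        Real.exp (a (X ω)) * (r (X ω) - bstar (X ω) * c (X ω)) else 0) ∂μ := by
    rw [hI_eq, hI_eq]
    congr 1
    calc ∫ ω, Real.exp (a (X ω) + η * q (Y ω)) * (ℓ (X ω) (Y ω) - bstar (X ω)) ∂μ₁
        = ∫ ω, Real.exp (a (X ω)) *
            (ℓ (X ω) (Y ω) * Real.exp (η * q (Y ω))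
              - bstar (X ω) * Real.exp (η * q (Y ω))) ∂μ₁ :=
          integral_congr_ae (Filter.Eventually.of_forall fun ω => by
            simp only [Real.exp_add]; ring)
      _ = _ := hEq1
      _ = ∫ ω, Real.exp (a (X ω)) * (r (X ω) - bstar (X ω) * c (X ω)) ∂μ₁ :=
          integral_congr_ae hver
  -- pull-out of the propensity under μ
  set ind : Ω → ℝ := fun ω => if S ω then (1 : ℝ) else 0 with hinddef
  have hind1 : Integrable ind μ := by
    rw [hinddef, hif_eq (fun _ => (1 : ℝ))]
    exact (integrable_const (1 : ℝ)).indicator hs_meas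
  have hφ_sm : StronglyMeasurable[MeasurableSpace.comap X inferInstance]
      (fun ω => Real.exp (a (X ω)) * (r (X ω) - bstar (X ω) * c (X ω))) :=
    (((Real.measurable_exp.comp ha_meas).comp hX_m).mul
      ((hr.comp hX_m).sub ((hbstar.comp hX_m).mul (hc.comp hX_m)))).stronglyMeasurable
  have hφintμ : Integrable (fun ω =>
      if S ω then Real.exp (a (X ω)) * (r (X ω) - bstar (X ω) * c (X ω)) else 0) μ :=
    (hint_iff _).2 hφint1
  have hprod1 : Integrable (fun ω =>
      (Real.exp (a (X ω)) * (r (X ω) - bstar (X ω) * c (X ω))) * ind ω) μ := by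
    refine hφintμ.congr (Filter.Eventually.of_forall fun ω => ?_)
    by_cases hω : S ω = true <;> simp [hinddef, hω]
  have hpull1 : ∫ ω, (if S ω then
        Real.exp (a (X ω)) * (r (X ω) - bstar (X ω) * c (X ω)) else 0) ∂μ
      = ∫ ω, (Real.exp (a (X ω)) * (r (X ω) - bstar (X ω) * c (X ω))) * p (X ω) ∂μ := by
    have h1 : ∫ ω, (if S ω then
          Real.exp (a (X ω)) * (r (X ω) - bstar (X ω) * c (X ω)) else 0) ∂μ
        = ∫ ω, (Real.exp (a (X ω)) * (r (X ω) - bstar (X ω) * c (X ω))) * ind ω ∂μ := by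
      refine integral_congr_ae (Filter.Eventually.of_forall fun ω => ?_)
      by_cases hω : S ω = true <;> simp [hinddef, hω]
    rw [h1, aux_pullout μ hm hφ_sm hind1 hprod1]
    refine integral_congr_ae ?_
    filter_upwards [hpver] with ω hω
    rw [← hω]
  -- pull-out of 1 - p under μ
  set ind0 : Ω → ℝ := fun ω => if S ω then (0 : ℝ) else 1 with hind0def
  have hind0 : Integrable ind0 μ := by
    refine ((integrable_const (1 : ℝ)).sub hind1).congr
      (Filter.Eventually.of_forall fun ω => ?_)
    by_cases hω : S ω = true <;> simp [hinddef, hind0def, hω]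
  have hcond0 : μ[ind0|MeasurableSpace.comap X inferInstance] =ᵐ[μ]
      fun ω => 1 - p (X ω) := by
    have h1 : ind0 = (fun _ => (1 : ℝ)) - ind := by
      funext ω
      by_cases hω : S ω = true <;> simp [hinddef, hind0def, hω]
    rw [h1]
    refine (condExp_sub (integrable_const (1 : ℝ)) hind1 _).trans ?_
    filter_upwards [hpver] with ω hω
    simp [condExp_const hm, ← hω]
  have hψ_sm : StronglyMeasurable[MeasurableSpace.comap X inferInstance]
      (fun ω => r (X ω) / c (X ω) - bstar (X ω)) :=
    (((hr.comp hX_m).div (hc.comp hX_m)).sub (hbstar.comp hX_m)).stronglyMeasurable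
  have hprod2 : Integrable (fun ω =>
      (r (X ω) / c (X ω) - bstar (X ω)) * ind0 ω) μ := by
    refine (hb_int.sub hbstar_int).congr (Filter.Eventually.of_forall fun ω => ?_)
    by_cases hω : S ω = true <;> simp [hind0def, hω]
  have hpull2 : ∫ ω, (r (X ω) / c (X ω) - bstar (X ω)) * ind0 ω ∂μ
      = ∫ ω, (r (X ω) / c (X ω) - bstar (X ω)) * (1 - p (X ω)) ∂μ := by
    rw [aux_pullout μ hm hψ_sm hind0 hprod2]
    refine integral_congr_ae ?_
    filter_upwards [hcond0] with ω hω
    rw [hω]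
  -- positivity of c ∘ X transfers from μ₁ to μ
  have hcposμ : ∀ᵐ ω ∂μ, 0 < c (X ω) := by
    set B : Set Ω := X ⁻¹' {x | c x ≤ 0} with hBdef
    have hB_m : MeasurableSet[MeasurableSpace.comap X inferInstance] B :=
      hX_m (measurableSet_le hc measurable_const)
    have hB_meas : MeasurableSet B := hm _ hB_m
    have hμ₁B : μ₁ B = 0 := by
      have h0 := ae_iff.mp hcpos
      have hBe : {ω | ¬ 0 < c (X ω)} = B := by
        ext ω; simp [hBdef, not_lt]
      rw [← hBe]; exact h0
    have hμBs : μ (B ∩ s) = 0 := by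
      have h1 : μ₁ B = (μ s)⁻¹ * μ (B ∩ s) := by
        rw [hμ₁def]
        show ((μ s)⁻¹ • μ.restrict s) B = _
        rw [Measure.smul_apply, smul_eq_mul, Measure.restrict_apply hB_meas]
      rw [h1] at hμ₁B
      rcases mul_eq_zero.mp hμ₁B with h | h
      · exact absurd h (ENNReal.inv_ne_zero.mpr hμs_fin)
      · exact h
    have hindB : ∫ ω in B, ind ω ∂μ = 0 := by
      have hsub : {ω | ind ω ≠ 0} ⊆ s := by
        intro ω hω
        by_cases h : S ω = true
        · exact h
        · simp [hinddef, h] at hω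
      have hz : ind =ᵐ[μ.restrict B] 0 := by
        rw [Filter.EventuallyEq, ae_iff]
        refine measure_mono_null (t := s) (fun ω hω => hsub (by simpa using hω)) ?_
        rw [Measure.restrict_apply hs_meas, Set.inter_comm]
        exact hμBs
      exact integral_eq_zero_of_ae hz
    have hpB : ∫ ω in B, p (X ω) ∂μ = 0 := by
      have h1 := setIntegral_condExp hm hind1 hB_m
      have h2 : ∫ ω in B, p (X ω) ∂μ
          = ∫ ω in B, (μ[ind|MeasurableSpace.comap X inferInstance]) ω ∂μ :=
        integral_congr_ae (ae_restrict_of_ae hpver)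
      rw [h2, h1, hindB]
    have hpX_int : Integrable (fun ω => p (X ω)) μ := integrable_condExp.congr hpver.symm
    have hpz : (fun ω => p (X ω)) =ᵐ[μ.restrict B] 0 := by
      refine (integral_eq_zero_iff_of_nonneg_ae ?_ hpX_int.restrict).mp hpB
      exact ae_restrict_of_ae (hppos.mono fun ω h => h.1.le)
    have hμB : μ B = 0 := by
      have h1 : ∀ᵐ (_ : Ω) ∂μ.restrict B, False := by
        filter_upwards [hpz, ae_restrict_of_ae hppos] with ω h1 h2
        exact h2.1.ne' h1
      have h2 := ae_iff.mp h1
      simpa [Measure.restrict_apply_univ] using h2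
    rw [ae_iff]
    have hBe : {ω | ¬ 0 < c (X ω)} = B := by
      ext ω; simp [hBdef, not_lt]
    rw [hBe]; exact hμB
  -- the key pointwise identity
  have hkey : (fun ω => (Real.exp (a (X ω)) * (r (X ω) - bstar (X ω) * c (X ω))) * p (X ω))
      =ᵐ[μ] (fun ω => (r (X ω) / c (X ω) - bstar (X ω)) * (1 - p (X ω))) := by
    filter_upwards [hppos, hcposμ] with ω hpω hcω
    obtain ⟨hp1, hp2⟩ := hpω
    have hea : Real.exp (a (X ω)) = (1 - p (X ω)) / p (X ω) / c (X ω) := by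
      rw [ha, Real.exp_sub, Real.exp_log (div_pos (by linarith) hp1), Real.exp_log hcω]
    rw [hea]
    field_simp
  -- assembling the chain for the weighted term
  have hchain : ∫ ω, (if S ω then
        Real.exp (a (X ω) + η * q (Y ω)) * (ℓ (X ω) (Y ω) - bstar (X ω)) else 0) ∂μ
      = (∫ ω, (if S ω then 0 else r (X ω) / c (X ω)) ∂μ)
        - ∫ ω, (if S ω then 0 else bstar (X ω)) ∂μ := by
    rw [hT, hpull1, integral_congr_ae hkey, ← hpull2, ← integral_sub hb_int hbstar_int]
    refine integral_congr_ae (Filter.Eventually.of_forall fun ω => ?_)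
    by_cases hω : S ω = true <;> simp [hind0def, hω]
  -- final assembly
  have hsplit : ∫ ω, (if S ω then ℓ (X ω) (Y ω)
          + Real.exp (a (X ω) + η * q (Y ω)) * (ℓ (X ω) (Y ω) - bstar (X ω))
        else bstar (X ω)) ∂μ
      = (∫ ω, (if S ω then ℓ (X ω) (Y ω) else 0) ∂μ)
        + ((∫ ω, (if S ω then
            Real.exp (a (X ω) + η * q (Y ω)) * (ℓ (X ω) (Y ω) - bstar (X ω)) else 0) ∂μ)
          + ∫ ω, (if S ω then 0 else bstar (X ω)) ∂μ) := by
    have e : (fun ω => (if S ω then ℓ (X ω) (Y ω)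
          + Real.exp (a (X ω) + η * q (Y ω)) * (ℓ (X ω) (Y ω) - bstar (X ω))
        else bstar (X ω)))
        = fun ω => (if S ω then ℓ (X ω) (Y ω) else 0)
          + ((if S ω then
              Real.exp (a (X ω) + η * q (Y ω)) * (ℓ (X ω) (Y ω) - bstar (X ω)) else 0)
            + (if S ω then 0 else bstar (X ω))) := by
      funext ω; by_cases hω : S ω = true <;> simp [hω]
    have hWC : Integrable (fun ω =>
        (if S ω then
          Real.exp (a (X ω) + η * q (Y ω)) * (ℓ (X ω) (Y ω) - bstar (X ω)) else 0)
        + (if S ω then 0 else bstar (X ω))) μ := hwt_int.add hbstar_int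
    rw [e, integral_add hind_int hWC, integral_add hwt_int hbstar_int]
  rw [hsplit, hchain]
  ring
end
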